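/- arXiv:1501.04714 — 6 statements merged into one kernel-verified Lean document; each statement's English description precedes it below -/
import Mathlib

section
/- Let ψ : ℕ → ℝ be positive and non-increasing and θ irrational with convergent denominators q_k. If ∑_{k≥0} ∑_{n=q_k}^{q_{k+1}-1} min(ψ(n), ‖q_k θ‖) < ∞, then for almost all s ∈ ℝ (Lebesgue), the inequality ‖nθ − s‖ < ψ(n) holds for only finitely many n ∈ ℕ. -/
open MeasureTheory Filter

/-- Distance from a real number to the nearest integer. -/
noncomputable def distNearestInt (x : ℝ) : ℝ := |x - round x|

open Topology

lemma dni_nonneg (x : ℝ) : 0 ≤ distNearestInt x := abs_nonneg _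

lemma dni_le_abs_sub_int (x : ℝ) (z : ℤ) : distNearestInt x ≤ |x - z| := round_le x z

lemma dni_add_le (x y : ℝ) :
    distNearestInt (x + y) ≤ distNearestInt x + distNearestInt y := by
  calc distNearestInt (x + y) ≤ |x + y - ((round x + round y : ℤ) : ℝ)| :=
        dni_le_abs_sub_int _ _
    _ ≤ distNearestInt x + distNearestInt y := by
        unfold distNearestInt
        push_cast
        rw [show x + y - ((round x : ℝ) + (round y : ℝ))
          = (x - round x) + (y - round y) by ring]
        exact abs_add_le _ _

lemma dni_neg (x : ℝ) : distNearestInt (-x) = distNearestInt x := by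
  have h : ∀ y : ℝ, distNearestInt (-y) ≤ distNearestInt y := by
    intro y
    calc distNearestInt (-y) ≤ |-y - ((-round y : ℤ) : ℝ)| := dni_le_abs_sub_int _ _
      _ = distNearestInt y := by
          unfold distNearestInt
          push_cast
          rw [show -y - -(round y : ℝ) = -(y - round y) by ring, abs_neg]
  refine le_antisymm (h x) ?_
  have := h (-x)
  rwa [neg_neg] at this

lemma dni_sub_le (x y : ℝ) :
    distNearestInt (x - y) ≤ distNearestInt x + distNearestInt y := by
  calc distNearestInt (x - y) ≤ distNearestInt x + distNearestInt (-y) := by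
        rw [sub_eq_add_neg]; exact dni_add_le _ _
    _ = _ := by rw [dni_neg]

lemma dni_nsmul_le (x : ℝ) (n : ℕ) :
    distNearestInt ((n : ℝ) * x) ≤ (n : ℝ) * distNearestInt x := by
  induction n with
  | zero => simp [distNearestInt]
  | succ n ih =>
      have : ((n + 1 : ℕ) : ℝ) * x = (n : ℝ) * x + x := by push_cast; ring
      rw [this]
      calc distNearestInt ((n : ℝ) * x + x)
          ≤ distNearestInt ((n : ℝ) * x) + distNearestInt x := dni_add_le _ _
        _ ≤ (n : ℝ) * distNearestInt x + distNearestInt x := by linarith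
        _ = ((n + 1 : ℕ) : ℝ) * distNearestInt x := by push_cast; ring

lemma dni_pos {x : ℝ} (h : Irrational x) : 0 < distNearestInt x := by
  rw [distNearestInt, abs_pos, sub_ne_zero]
  exact h.ne_int _

section CF
open GenContFract
variable {θ : ℝ}


lemma cf_not_term (hθ : Irrational θ) (n : ℕ) : ¬ (GenContFract.of θ).TerminatedAt n := by
  intro h
  obtain ⟨r, hr⟩ := (GenContFract.terminates_iff_rat θ).mp ⟨n, h⟩
  exact hθ ⟨r, hr.symm⟩

lemma cf_fib_le (hθ : Irrational θ) {q : ℕ → ℕ}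
    (hq : ∀ k, (q k : ℝ) = (GenContFract.of θ).dens k) (k : ℕ) :
    Nat.fib (k + 1) ≤ q k := by
  have h := succ_nth_fib_le_of_nth_den (v := θ) (n := k) (Or.inr (cf_not_term hθ _))
  rw [← hq k] at h
  exact_mod_cast h

lemma cf_q_pos (hθ : Irrational θ) {q : ℕ → ℕ}
    (hq : ∀ k, (q k : ℝ) = (GenContFract.of θ).dens k) (k : ℕ) : 0 < q k :=
  lt_of_lt_of_le (Nat.fib_pos.mpr (Nat.succ_pos k)) (cf_fib_le hθ hq k)

lemma cf_q_mono (hθ : Irrational θ) {q : ℕ → ℕ}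
    (hq : ∀ k, (q k : ℝ) = (GenContFract.of θ).dens k) : Monotone q := by
  apply monotone_nat_of_le_succ
  intro k
  have h := of_den_mono (v := θ) (n := k)
  rw [← hq k, ← hq (k+1)] at h
  exact_mod_cast h

lemma cf_q_rec (hθ : Irrational θ) {q : ℕ → ℕ}
    (hq : ∀ k, (q k : ℝ) = (GenContFract.of θ).dens k) (k : ℕ) :
    q k + q (k + 1) ≤ q (k + 2) := by
  obtain ⟨gp, hgp⟩ : ∃ gp, (GenContFract.of θ).s.get? (k+1) = some gp :=
    Option.ne_none_iff_exists'.1 (cf_not_term hθ (k+1))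
  have hrec := dens_recurrence (g := GenContFract.of θ) hgp rfl rfl
  have hb : 1 ≤ gp.b := of_one_le_get?_partDen (partDen_eq_s_b hgp)
  have ha : gp.a = 1 := of_partNum_eq_one (partNum_eq_s_a hgp)
  rw [ha] at hrec
  have hd0 : (0:ℝ) ≤ (GenContFract.of θ).dens (k+1) := zero_le_of_den
  have h : (q k : ℝ) + q (k+1) ≤ q (k+2) := by
    rw [hq k, hq (k+1), hq (k+2), hrec]
    nlinarith [hb, hd0]
  exact_mod_cast h

lemma cf_num_int (hθ : Irrational θ) (k : ℕ) :
    ∃ z : ℤ, (GenContFract.of θ).nums k = (z : ℝ) := by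
  induction k using Nat.twoStepInduction with
  | zero => exact ⟨⌊θ⌋, by rw [zeroth_num_eq_h, of_h_eq_floor]⟩
  | one =>
      obtain ⟨gp, hgp⟩ : ∃ gp, (GenContFract.of θ).s.get? 0 = some gp :=
        Option.ne_none_iff_exists'.1 (cf_not_term hθ 0)
      obtain ⟨ha, z, hz⟩ := of_partNum_eq_one_and_exists_int_partDen_eq hgp
      refine ⟨z * ⌊θ⌋ + 1, ?_⟩
      rw [first_num_eq hgp, of_h_eq_floor, ha, hz]
      push_cast
      ring
  | more n ih1 ih2 =>
      obtain ⟨gp, hgp⟩ : ∃ gp, (GenContFract.of θ).s.get? (n+1) = some gp :=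
        Option.ne_none_iff_exists'.1 (cf_not_term hθ (n+1))
      obtain ⟨ha, z, hz⟩ := of_partNum_eq_one_and_exists_int_partDen_eq hgp
      obtain ⟨z0, hz0⟩ := ih1
      obtain ⟨z1, hz1⟩ := ih2
      refine ⟨z * z1 + z0, ?_⟩
      rw [nums_recurrence (g := GenContFract.of θ) hgp hz0 hz1, ha, hz]
      push_cast
      ring

lemma cf_approx (hθ : Irrational θ) {q : ℕ → ℕ}
    (hq : ∀ k, (q k : ℝ) = (GenContFract.of θ).dens k) (k : ℕ) :
    |(q k : ℝ) * θ - (GenContFract.of θ).nums k| ≤ 1 / (q (k+1) : ℝ) := by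
  have h := abs_sub_convs_le (v := θ) (n := k) (cf_not_term hθ k)
  have hqpos : (0:ℝ) < q k := by exact_mod_cast cf_q_pos hθ hq k
  have hq1pos : (0:ℝ) < q (k+1) := by exact_mod_cast cf_q_pos hθ hq (k+1)
  rw [conv_eq_num_div_den, ← hq k, ← hq (k+1)] at h
  have h2 : |(q k : ℝ)| * |θ - (GenContFract.of θ).nums k / (q k : ℝ)|
      ≤ (q k : ℝ) * (1 / ((q k : ℝ) * (q (k+1) : ℝ))) := by
    rw [abs_of_pos hqpos]
    exact mul_le_mul_of_nonneg_left h (le_of_lt hqpos)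
  rw [← abs_mul] at h2
  have e : (q k : ℝ) * (θ - (GenContFract.of θ).nums k / (q k : ℝ))
      = (q k : ℝ) * θ - (GenContFract.of θ).nums k := by
    field_simp
  rw [e] at h2
  calc |(q k : ℝ) * θ - (GenContFract.of θ).nums k|
      ≤ (q k : ℝ) * (1 / ((q k : ℝ) * (q (k+1) : ℝ))) := h2
    _ = 1 / (q (k+1) : ℝ) := by field_simp

lemma cf_det (hθ : Irrational θ) (k : ℕ) :
    (GenContFract.of θ).nums k * (GenContFract.of θ).dens (k+1)
      - (GenContFract.of θ).dens k * (GenContFract.of θ).nums (k+1) = (-1)^(k+1) := by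
  have hsimp := GenContFract.of_isSimpContFract θ
  let s : SimpContFract ℝ := ⟨GenContFract.of θ, hsimp⟩
  have : (↑s : GenContFract ℝ) = GenContFract.of θ := rfl
  have h := SimpContFract.determinant (s := s) (n := k) (by rw [this]; exact cf_not_term hθ k)
  rw [this] at h
  exact h


lemma cf_d_le (hθ : Irrational θ) {q : ℕ → ℕ}
    (hq : ∀ k, (q k : ℝ) = (GenContFract.of θ).dens k) (k : ℕ) :
    distNearestInt ((q k : ℝ) * θ) ≤ 1 / (q (k+1) : ℝ) := by
  obtain ⟨z, hz⟩ := cf_num_int hθ k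
  calc distNearestInt ((q k : ℝ) * θ) ≤ |(q k : ℝ) * θ - (z : ℝ)| := dni_le_abs_sub_int _ _
    _ ≤ 1 / (q (k+1) : ℝ) := by rw [← hz]; exact cf_approx hθ hq k

lemma cf_d_pos (hθ : Irrational θ) {q : ℕ → ℕ}
    (hq : ∀ k, (q k : ℝ) = (GenContFract.of θ).dens k) (k : ℕ) :
    0 < distNearestInt ((q k : ℝ) * θ) :=
  dni_pos (Irrational.natCast_mul hθ (cf_q_pos hθ hq k).ne')

lemma cf_d_lower (hθ : Irrational θ) {q : ℕ → ℕ}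
    (hq : ∀ k, (q k : ℝ) = (GenContFract.of θ).dens k) (k : ℕ) (h2 : 2 ≤ q (k+1)) :
    1 / (2 * (q (k+1) : ℝ)) ≤ distNearestInt ((q k : ℝ) * θ) := by
  obtain ⟨p, hp⟩ := cf_num_int hθ k
  obtain ⟨p1, hp1⟩ := cf_num_int hθ (k+1)
  have hQpos : (0:ℝ) < (q k : ℝ) := by exact_mod_cast cf_q_pos hθ hq k
  have hQ1two : (2:ℝ) ≤ (q (k+1) : ℝ) := by exact_mod_cast h2
  have hQ1pos : (0:ℝ) < (q (k+1) : ℝ) := by linarith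
  have hQ2 : (q k : ℝ) + (q (k+1) : ℝ) ≤ (q (k+2) : ℝ) := by
    exact_mod_cast cf_q_rec hθ hq k
  have hQ2pos : (0:ℝ) < (q (k+2) : ℝ) := by linarith
  have hQle : (q k : ℝ) ≤ (q (k+1) : ℝ) := by
    exact_mod_cast cf_q_mono hθ hq (Nat.le_succ k)
  have hdet := cf_det hθ k
  rw [hp, hp1, ← hq k, ← hq (k+1)] at hdet
  have hdetZ : p * (q (k+1) : ℤ) - (q k : ℤ) * p1 = (-1)^(k+1) := by
    have h' : ((p * (q (k+1) : ℤ) - (q k : ℤ) * p1 : ℤ) : ℝ) = (((-1)^(k+1) : ℤ) : ℝ) := by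
      push_cast
      push_cast at hdet
      linarith [hdet]
    exact_mod_cast h'
  set z : ℤ := round ((q k : ℝ) * θ) with hzdef
  have hne : z * (q (k+1) : ℤ) - (q k : ℤ) * p1 ≠ 0 := by
    intro h0
    have hpz : (p - z) * (q (k+1) : ℤ) = (-1)^(k+1) := by linarith [hdetZ, h0]
    have habs : |p - z| * (q (k+1) : ℤ) = 1 := by
      have h'' := congrArg abs hpz
      rwa [abs_mul, abs_pow, abs_neg, abs_one, one_pow,
        abs_of_nonneg (by positivity : (0:ℤ) ≤ ((q (k+1) : ℕ) : ℤ))] at h''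
    rcases eq_or_lt_of_le (abs_nonneg (p - z)) with h | h
    · rw [← h, zero_mul] at habs; exact absurd habs (by norm_num)
    · have h1 : 1 ≤ |p - z| := h
      have : (2:ℤ) ≤ |p - z| * (q (k+1) : ℤ) := by
        calc (2:ℤ) ≤ ((q (k+1) : ℕ) : ℤ) := by exact_mod_cast h2
          _ = 1 * ((q (k+1) : ℕ) : ℤ) := (one_mul _).symm
          _ ≤ |p - z| * (q (k+1) : ℤ) :=
              mul_le_mul_of_nonneg_right h1 (by positivity)
      omega
  have habs1 : (1:ℝ) ≤ |(z:ℝ) * (q (k+1) : ℝ) - (q k : ℝ) * (p1:ℝ)| := by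
    have h1 : (1:ℤ) ≤ |z * (q (k+1) : ℤ) - (q k : ℤ) * p1| := Int.one_le_abs hne
    have h2' : (1:ℝ) ≤ |((z * (q (k+1) : ℤ) - (q k : ℤ) * p1 : ℤ) : ℝ)| := by
      rw [← Int.cast_abs]
      exact_mod_cast h1
    push_cast at h2'
    exact h2'
  have hDval : distNearestInt ((q k : ℝ) * θ) = |(q k : ℝ) * θ - (z:ℝ)| := rfl
  have happrox1 : |(q (k+1) : ℝ) * θ - (p1:ℝ)| ≤ 1 / (q (k+2) : ℝ) := by
    rw [← hp1]; exact cf_approx hθ hq (k+1)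
  set D : ℝ := distNearestInt ((q k : ℝ) * θ) with hDdef
  have hDnn : 0 ≤ D := dni_nonneg _
  have key : (1:ℝ) ≤ (q (k+1) : ℝ) * D + (q k : ℝ) * (1 / (q (k+2) : ℝ)) := by
    have tri : |(z:ℝ) * (q (k+1) : ℝ) - (q k : ℝ) * (p1:ℝ)|
        ≤ |(z:ℝ) * (q (k+1) : ℝ) - (q k : ℝ) * θ * (q (k+1) : ℝ)|
          + |(q k : ℝ) * θ * (q (k+1) : ℝ) - (q k : ℝ) * (p1:ℝ)| := by
      calc |(z:ℝ) * (q (k+1) : ℝ) - (q k : ℝ) * (p1:ℝ)|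
          = |((z:ℝ) * (q (k+1) : ℝ) - (q k : ℝ) * θ * (q (k+1) : ℝ))
            + ((q k : ℝ) * θ * (q (k+1) : ℝ) - (q k : ℝ) * (p1:ℝ))| := by ring_nf
        _ ≤ _ := abs_add_le _ _
    have e1 : |(z:ℝ) * (q (k+1) : ℝ) - (q k : ℝ) * θ * (q (k+1) : ℝ)|
        = (q (k+1) : ℝ) * D := by
      rw [show (z:ℝ) * (q (k+1) : ℝ) - (q k : ℝ) * θ * (q (k+1) : ℝ)
        = (q (k+1) : ℝ) * ((z:ℝ) - (q k : ℝ) * θ) by ring, abs_mul,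
        abs_of_pos hQ1pos, abs_sub_comm, ← hDval]
    have e2 : |(q k : ℝ) * θ * (q (k+1) : ℝ) - (q k : ℝ) * (p1:ℝ)|
        ≤ (q k : ℝ) * (1 / (q (k+2) : ℝ)) := by
      rw [show (q k : ℝ) * θ * (q (k+1) : ℝ) - (q k : ℝ) * (p1:ℝ)
        = (q k : ℝ) * ((q (k+1) : ℝ) * θ - (p1:ℝ)) by ring, abs_mul, abs_of_pos hQpos]
      exact mul_le_mul_of_nonneg_left happrox1 hQpos.le
    calc (1:ℝ) ≤ |(z:ℝ) * (q (k+1) : ℝ) - (q k : ℝ) * (p1:ℝ)| := habs1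
      _ ≤ _ := tri
      _ ≤ (q (k+1) : ℝ) * D + (q k : ℝ) * (1 / (q (k+2) : ℝ)) := by
          rw [e1]; linarith [e2]
  have hu2 : (1 / (q (k+2) : ℝ)) * ((q k : ℝ) + (q (k+1) : ℝ)) ≤ 1 := by
    rw [one_div, inv_mul_le_iff₀ hQ2pos]
    linarith
  have hint1 : (0:ℝ) ≤ ((q k : ℝ) + (q (k+1) : ℝ))
      * ((q (k+1) : ℝ) * D + (q k : ℝ) * (1 / (q (k+2) : ℝ)) - 1) :=
    mul_nonneg (by linarith) (by linarith [key])
  have hint2 : (q k : ℝ) * ((1 / (q (k+2) : ℝ)) * ((q k : ℝ) + (q (k+1) : ℝ)))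
      ≤ (q k : ℝ) * 1 := mul_le_mul_of_nonneg_left hu2 hQpos.le
  have hkey2 : (q (k+1) : ℝ) ≤ (q (k+1) : ℝ) * (D * ((q k : ℝ) + (q (k+1) : ℝ))) := by
    nlinarith [hint1, hint2]
  have hD2 : 1 ≤ D * ((q k : ℝ) + (q (k+1) : ℝ)) := by
    have hkey2' : (q (k+1) : ℝ) * 1 ≤ (q (k+1) : ℝ) * (D * ((q k : ℝ) + (q (k+1) : ℝ))) := by
      rw [mul_one]; exact hkey2
    exact (mul_le_mul_iff_right₀ hQ1pos).mp hkey2'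
  rw [div_le_iff₀ (by positivity)]
  nlinarith [hD2, mul_nonneg hDnn (by linarith : (0:ℝ) ≤ (q (k+1) : ℝ) - (q k : ℝ))]

end CF

section Measure
open Set

lemma window_bound (a r z : ℝ) (hr : 0 < r) :
    volume {s : ℝ | s ∈ Set.Icc z (z+1) ∧ distNearestInt (a - s) < r}
      ≤ ENNReal.ofReal (6 * r) := by
  rcases le_or_gt (1/2 : ℝ) r with hhalf | hhalf
  · calc volume {s : ℝ | s ∈ Set.Icc z (z+1) ∧ distNearestInt (a - s) < r}
        ≤ volume (Set.Icc z (z+1)) := measure_mono (fun s hs => hs.1)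
      _ = ENNReal.ofReal 1 := by rw [Real.volume_Icc]; norm_num
      _ ≤ ENNReal.ofReal (6*r) := ENNReal.ofReal_le_ofReal (by linarith)
  · set L : ℝ := a - z - 1 - r with hL
    have hsub : {s : ℝ | s ∈ Set.Icc z (z+1) ∧ distNearestInt (a - s) < r}
        ⊆ Set.Ioo (a - ((⌊L⌋:ℝ)+1) - r) (a - ((⌊L⌋:ℝ)+1) + r)
          ∪ Set.Ioo (a - ((⌊L⌋:ℝ)+2) - r) (a - ((⌊L⌋:ℝ)+2) + r) := by
      rintro s ⟨⟨hs1, hs2⟩, hd⟩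
      have hd' : |a - s - (round (a - s) : ℝ)| < r := hd
      have habs := abs_lt.mp hd'
      set p : ℤ := round (a - s) with hp
      have h1 : L < (p:ℝ) := by simp only [hL]; linarith [habs.2]
      have h2 : (p:ℝ) < L + 2 := by simp only [hL]; linarith [habs.1]
      have hp1 : ⌊L⌋ < p := Int.floor_lt.mpr h1
      have hp2 : p - 2 ≤ ⌊L⌋ := Int.le_floor.mpr (by push_cast; linarith)
      have hcases : p = ⌊L⌋ + 1 ∨ p = ⌊L⌋ + 2 := by omega
      have hs_in : s ∈ Set.Ioo (a - (p:ℝ) - r) (a - (p:ℝ) + r) :=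
        ⟨by linarith [habs.2], by linarith [habs.1]⟩
      rcases hcases with h | h
      · left; rw [show ((⌊L⌋:ℝ)+1) = (p:ℝ) by rw [h]; push_cast; ring]; exact hs_in
      · right; rw [show ((⌊L⌋:ℝ)+2) = (p:ℝ) by rw [h]; push_cast; ring]; exact hs_in
    calc volume {s : ℝ | s ∈ Set.Icc z (z+1) ∧ distNearestInt (a - s) < r}
        ≤ volume (Set.Ioo (a - ((⌊L⌋:ℝ)+1) - r) (a - ((⌊L⌋:ℝ)+1) + r)
            ∪ Set.Ioo (a - ((⌊L⌋:ℝ)+2) - r) (a - ((⌊L⌋:ℝ)+2) + r)) := measure_mono hsub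
      _ ≤ volume (Set.Ioo (a - ((⌊L⌋:ℝ)+1) - r) (a - ((⌊L⌋:ℝ)+1) + r))
            + volume (Set.Ioo (a - ((⌊L⌋:ℝ)+2) - r) (a - ((⌊L⌋:ℝ)+2) + r)) :=
          measure_union_le _ _
      _ = ENNReal.ofReal (2*r) + ENNReal.ofReal (2*r) := by
          rw [Real.volume_Ioo, Real.volume_Ioo]
          congr 1 <;> ring_nf
      _ ≤ ENNReal.ofReal (6 * r) := by
          rw [← ENNReal.ofReal_add (by linarith) (by linarith)]
          exact ENNReal.ofReal_le_ofReal (by linarith)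

end Measure

noncomputable def dseq (θ : ℝ) (q : ℕ → ℕ) (k : ℕ) : ℝ := distNearestInt ((q k : ℝ) * θ)

noncomputable def Bsum (θ : ℝ) (ψ : ℕ → ℝ) (q : ℕ → ℕ) (k : ℕ) : ℝ :=
  ∑ n ∈ Finset.Ico (q k) (q (k+1)), min (ψ n) (dseq θ q k)

section Main
variable {θ : ℝ} {q : ℕ → ℕ} {ψ : ℕ → ℝ}

lemma block_lower (k' : ℕ) (x : ℝ)
    (hx : ∀ n ∈ Finset.Ico (q k') (q (k'+1)), x ≤ min (ψ n) (dseq θ q k')) :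
    ((q (k'+1) - q k' : ℕ) : ℝ) * x ≤ Bsum θ ψ q k' := by
  have h := Finset.card_nsmul_le_sum (Finset.Ico (q k') (q (k'+1)))
    (fun n => min (ψ n) (dseq θ q k')) x hx
  rw [Nat.card_Ico, nsmul_eq_mul] at h
  exact h

lemma two_blocks (hθ : Irrational θ)
    (hq : ∀ k, (q k : ℝ) = (GenContFract.of θ).dens k)
    (hψmono : ∀ m n, m ≤ n → ψ n ≤ ψ m)
    (m : ℕ) (x : ℝ) (hx0 : 0 ≤ x) (hxψ : x ≤ ψ (q (m+2)))
    (hxm : x ≤ dseq θ q m) (hxm1 : x ≤ dseq θ q (m+1)) :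
    (q (m+2) : ℝ) * x ≤ 2 * (Bsum θ ψ q m + Bsum θ ψ q (m+1)) := by
  have hmono := cf_q_mono hθ hq
  have h01 : q m ≤ q (m+1) := hmono (by omega)
  have h12 : q (m+1) ≤ q (m+2) := hmono (by omega)
  have h0 := block_lower (θ := θ) (q := q) (ψ := ψ) m x (fun n hn => by
    have hn2 : n ≤ q (m+2) := le_trans (le_of_lt (Finset.mem_Ico.mp hn).2) h12
    exact le_min (le_trans hxψ (hψmono n (q (m+2)) hn2)) hxm)
  have h1 := block_lower (θ := θ) (q := q) (ψ := ψ) (m+1) x (fun n hn => by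
    have hn2 : n ≤ q (m+2) := le_of_lt (Finset.mem_Ico.mp hn).2
    exact le_min (le_trans hxψ (hψmono n (q (m+2)) hn2)) hxm1)
  have hrec := cf_q_rec hθ hq m
  have hc : (q (m+1) - q m) + (q (m+2) - q (m+1)) = q (m+2) - q m := by omega
  have hhalfN : q (m+2) ≤ 2 * (q (m+2) - q m) := by omega
  have hhalf : (q (m+2) : ℝ) ≤ 2 * ((q (m+2) - q m : ℕ) : ℝ) := by exact_mod_cast hhalfN
  have hcR : ((q (m+1) - q m : ℕ) : ℝ) + ((q (m+2) - q (m+1) : ℕ) : ℝ)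
      = ((q (m+2) - q m : ℕ) : ℝ) := by exact_mod_cast congrArg (Nat.cast (R := ℝ)) hc
  nlinarith [mul_le_mul_of_nonneg_right hhalf hx0, h0, h1,
    mul_le_mul_of_nonneg_right (le_of_eq hcR) hx0]

lemma q_two_le (hθ : Irrational θ)
    (hq : ∀ k, (q k : ℝ) = (GenContFract.of θ).dens k) {k : ℕ} (hk : 2 ≤ k) :
    2 ≤ q k := by
  calc 2 = Nat.fib 3 := by decide
    _ ≤ Nat.fib (k+1) := Nat.fib_mono (by omega)
    _ ≤ q k := cf_fib_le hθ hq k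

lemma bad_lower (hθ : Irrational θ)
    (hq : ∀ k, (q k : ℝ) = (GenContFract.of θ).dens k)
    (hψmono : ∀ m n, m ≤ n → ψ n ≤ ψ m)
    (m : ℕ) (hm : 1 ≤ m)
    (hbad : min (dseq θ q m) (dseq θ q (m+1)) ≤ ψ (q (m+2))) :
    1/4 ≤ Bsum θ ψ q m + Bsum θ ψ q (m+1) := by
  set x := min (dseq θ q m) (dseq θ q (m+1)) with hx
  have hq1 : 2 ≤ q (m+1) := q_two_le hθ hq (by omega)
  have hq2 : 2 ≤ q (m+2) := q_two_le hθ hq (by omega)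
  have hQ2pos : (0:ℝ) < (q (m+2) : ℝ) := by
    have := cf_q_pos hθ hq (m+2); exact_mod_cast this
  have h12 : (q (m+1) : ℝ) ≤ (q (m+2) : ℝ) := by
    exact_mod_cast cf_q_mono hθ hq (show m+1 ≤ m+2 by omega)
  have hd1 : 1 / (2 * (q (m+2) : ℝ)) ≤ dseq θ q m := by
    calc 1 / (2 * (q (m+2) : ℝ)) ≤ 1 / (2 * (q (m+1) : ℝ)) := by
          apply div_le_div_of_nonneg_left (by norm_num) (by positivity) (by linarith)
      _ ≤ dseq θ q m := cf_d_lower hθ hq m hq1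
  have hd2 : 1 / (2 * (q (m+2) : ℝ)) ≤ dseq θ q (m+1) := cf_d_lower hθ hq (m+1) hq2
  have hxlow : 1 / (2 * (q (m+2) : ℝ)) ≤ x := le_min hd1 hd2
  have hx0 : 0 ≤ x := le_trans (by positivity) hxlow
  have htb := two_blocks hθ hq hψmono m x hx0 hbad (min_le_left _ _) (min_le_right _ _)
  have hqx : (1:ℝ)/2 ≤ (q (m+2) : ℝ) * x := by
    calc (1:ℝ)/2 = (q (m+2) : ℝ) * (1 / (2 * (q (m+2) : ℝ))) := by field_simp
      _ ≤ (q (m+2) : ℝ) * x := mul_le_mul_of_nonneg_left hxlow hQ2pos.le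
  linarith

lemma block_bound (hθ : Irrational θ)
    (hq : ∀ k, (q k : ℝ) = (GenContFract.of θ).dens k)
    (hψpos : ∀ n, 0 < ψ n) (hψmono : ∀ m n, m ≤ n → ψ n ≤ ψ m)
    (z : ℤ) (m : ℕ)
    (hgood : ψ (q (m+2)) < min (dseq θ q m) (dseq θ q (m+1))) :
    volume {s : ℝ | s ∈ Set.Icc (z:ℝ) ((z:ℝ)+1) ∧
        ∃ n, n ∈ Finset.Ico (q (m+2)) (q (m+2+1)) ∧ distNearestInt ((n:ℝ) * θ - s) < ψ n}
      ≤ ENNReal.ofReal (12 * (Bsum θ ψ q m + Bsum θ ψ q (m+1) + Bsum θ ψ q (m+2))) := by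
  have hqk : 0 < q (m+2) := cf_q_pos hθ hq (m+2)
  have hqkR : (0:ℝ) < (q (m+2) : ℝ) := by exact_mod_cast hqk
  have hdpos : 0 < dseq θ q (m+2) := cf_d_pos hθ hq (m+2)
  have hΨpos : 0 < ψ (q (m+2)) := hψpos _
  classical
  set Ss : Finset ℕ := (Finset.Ico (q (m+2)) (q (m+2+1))).filter
    (fun n => ψ n < dseq θ q (m+2)) with hSs
  set Sb : Finset ℕ := (Finset.Ico (q (m+2)) (q (m+2+1))).filter
    (fun n => dseq θ q (m+2) ≤ ψ n) with hSb
  set c : ℕ := Sb.card with hc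
  set R : ℝ := ψ (q (m+2)) + ((c:ℝ)/(q (m+2):ℝ)) * dseq θ q (m+2) with hR
  have hcdnn : 0 ≤ ((c:ℝ)/(q (m+2):ℝ)) * dseq θ q (m+2) :=
    mul_nonneg (div_nonneg (Nat.cast_nonneg c) hqkR.le) (dni_nonneg _)
  have hRpos : 0 < R := by rw [hR]; exact add_pos_of_pos_of_nonneg hΨpos hcdnn
  -- Sb is an initial segment of length c
  have hSb_sub : ∀ n ∈ Sb, n < q (m+2) + c := by
    intro n hn
    by_contra hcon
    push_neg at hcon
    obtain ⟨hnIco, hnd⟩ := Finset.mem_filter.mp hn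
    obtain ⟨hn1, hn2⟩ := Finset.mem_Ico.mp hnIco
    have hsub2 : Finset.Ico (q (m+2)) (n+1) ⊆ Sb := by
      intro m' hm'
      obtain ⟨hm1, hm2⟩ := Finset.mem_Ico.mp hm'
      have hm'n : m' ≤ n := by omega
      refine Finset.mem_filter.mpr ⟨Finset.mem_Ico.mpr ⟨hm1, by omega⟩, ?_⟩
      exact le_trans hnd (hψmono m' n hm'n)
    have hcard := Finset.card_le_card hsub2
    rw [Nat.card_Ico] at hcard
    omega
  -- covering
  have hcover : {s : ℝ | s ∈ Set.Icc (z:ℝ) ((z:ℝ)+1) ∧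
        ∃ n, n ∈ Finset.Ico (q (m+2)) (q (m+2+1)) ∧ distNearestInt ((n:ℝ) * θ - s) < ψ n}
      ⊆ (⋃ n ∈ Ss, {s : ℝ | s ∈ Set.Icc (z:ℝ) ((z:ℝ)+1) ∧ distNearestInt ((n:ℝ) * θ - s) < ψ n})
        ∪ (⋃ n₀ ∈ Finset.Ico (q (m+2)) (q (m+2) + q (m+2)),
            {s : ℝ | s ∈ Set.Icc (z:ℝ) ((z:ℝ)+1) ∧ distNearestInt ((n₀:ℝ) * θ - s) < R}) := by
    rintro s ⟨hsI, n, hn, hdn⟩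
    by_cases hcase : ψ n < dseq θ q (m+2)
    · left
      exact Set.mem_biUnion (Finset.mem_filter.mpr ⟨hn, hcase⟩) ⟨hsI, hdn⟩
    · right
      push_neg at hcase
      have hnSb : n ∈ Sb := Finset.mem_filter.mpr ⟨hn, hcase⟩
      have hnlt : n < q (m+2) + c := hSb_sub n hnSb
      obtain ⟨hnq, _⟩ := Finset.mem_Ico.mp hn
      obtain ⟨j, n₀, hn₀mem, hexp, hjq⟩ :
          ∃ j n₀, n₀ ∈ Finset.Ico (q (m+2)) (q (m+2) + q (m+2)) ∧
            n₀ + j * q (m+2) = n ∧ j * q (m+2) < c := by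
        refine ⟨(n - q (m+2)) / q (m+2), q (m+2) + (n - q (m+2)) % q (m+2), ?_, ?_, ?_⟩
        · have hmodlt : (n - q (m+2)) % q (m+2) < q (m+2) := Nat.mod_lt _ hqk
          exact Finset.mem_Ico.mpr ⟨by omega, by omega⟩
        · calc q (m+2) + (n - q (m+2)) % q (m+2) + (n - q (m+2)) / q (m+2) * q (m+2)
              = q (m+2) + ((n - q (m+2)) % q (m+2)
                + q (m+2) * ((n - q (m+2)) / q (m+2))) := by ring
            _ = q (m+2) + (n - q (m+2)) := by rw [Nat.mod_add_div]
            _ = n := by omega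
        · have h := Nat.div_mul_le_self (n - q (m+2)) (q (m+2))
          omega
      have hcastn : (n:ℝ) = (n₀:ℝ) + (j:ℝ) * (q (m+2):ℝ) := by
        exact_mod_cast congrArg (Nat.cast (R := ℝ)) hexp.symm
      have hjle : (j:ℝ) ≤ (c:ℝ) / (q (m+2):ℝ) := by
        rw [le_div_iff₀ hqkR]
        exact_mod_cast le_of_lt hjq
      have hd₀ : distNearestInt ((n₀:ℝ) * θ - s) < R := by
        have heq : (n₀:ℝ) * θ - s = ((n:ℝ) * θ - s) - ((j:ℝ) * ((q (m+2):ℝ) * θ)) := by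
          rw [hcastn]; ring
        calc distNearestInt ((n₀:ℝ) * θ - s)
            ≤ distNearestInt ((n:ℝ) * θ - s)
              + distNearestInt ((j:ℝ) * ((q (m+2):ℝ) * θ)) := by
              rw [heq]; exact dni_sub_le _ _
          _ ≤ distNearestInt ((n:ℝ) * θ - s) + (j:ℝ) * dseq θ q (m+2) := by
              have := dni_nsmul_le ((q (m+2):ℝ) * θ) j
              exact add_le_add_right this _
          _ < ψ n + (j:ℝ) * dseq θ q (m+2) := by
              exact add_lt_add_left hdn _
          _ ≤ ψ (q (m+2)) + ((c:ℝ)/(q (m+2):ℝ)) * dseq θ q (m+2) := by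
              have h1 : ψ n ≤ ψ (q (m+2)) := hψmono (q (m+2)) n hnq
              have h2 : (j:ℝ) * dseq θ q (m+2)
                  ≤ ((c:ℝ)/(q (m+2):ℝ)) * dseq θ q (m+2) :=
                mul_le_mul_of_nonneg_right hjle (dni_nonneg _)
              linarith
          _ = R := hR.symm
      exact Set.mem_biUnion hn₀mem ⟨hsI, hd₀⟩
  -- measure estimates
  have hsmallsum : ∑ n ∈ Ss, ψ n ≤ Bsum θ ψ q (m+2) := by
    have e : ∑ n ∈ Ss, ψ n = ∑ n ∈ Ss, min (ψ n) (dseq θ q (m+2)) := by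
      apply Finset.sum_congr rfl
      intro n hn
      exact (min_eq_left (le_of_lt (Finset.mem_filter.mp hn).2)).symm
    rw [e, Bsum]
    apply Finset.sum_le_sum_of_subset_of_nonneg (Finset.filter_subset _ _)
    intro n _ _
    exact le_min (hψpos n).le (dni_nonneg _)
  have hbig1 : (c:ℝ) * dseq θ q (m+2) ≤ Bsum θ ψ q (m+2) := by
    have e : ∑ n ∈ Sb, min (ψ n) (dseq θ q (m+2)) = (c:ℝ) * dseq θ q (m+2) := by
      rw [Finset.sum_congr rfl (fun n hn =>
        min_eq_right (Finset.mem_filter.mp hn).2), Finset.sum_const, nsmul_eq_mul]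
    rw [← e, Bsum]
    apply Finset.sum_le_sum_of_subset_of_nonneg (Finset.filter_subset _ _)
    intro n _ _
    exact le_min (hψpos n).le (dni_nonneg _)
  have hbig2 : (q (m+2):ℝ) * ψ (q (m+2)) ≤ 2 * (Bsum θ ψ q m + Bsum θ ψ q (m+1)) :=
    two_blocks hθ hq hψmono m (ψ (q (m+2))) hΨpos.le (le_refl _)
      (le_of_lt (lt_of_lt_of_le hgood (min_le_left _ _)))
      (le_of_lt (lt_of_lt_of_le hgood (min_le_right _ _)))
  have hqR : (q (m+2):ℝ) * (6 * R) = 6 * ((q (m+2):ℝ) * ψ (q (m+2))) + 6 * ((c:ℝ) * dseq θ q (m+2)) := by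
    rw [hR]
    field_simp
  calc volume {s : ℝ | s ∈ Set.Icc (z:ℝ) ((z:ℝ)+1) ∧
        ∃ n, n ∈ Finset.Ico (q (m+2)) (q (m+2+1)) ∧ distNearestInt ((n:ℝ) * θ - s) < ψ n}
      ≤ volume ((⋃ n ∈ Ss, {s : ℝ | s ∈ Set.Icc (z:ℝ) ((z:ℝ)+1) ∧
            distNearestInt ((n:ℝ) * θ - s) < ψ n})
        ∪ (⋃ n₀ ∈ Finset.Ico (q (m+2)) (q (m+2) + q (m+2)),
            {s : ℝ | s ∈ Set.Icc (z:ℝ) ((z:ℝ)+1) ∧ distNearestInt ((n₀:ℝ) * θ - s) < R})) :=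
        measure_mono hcover
    _ ≤ volume (⋃ n ∈ Ss, {s : ℝ | s ∈ Set.Icc (z:ℝ) ((z:ℝ)+1) ∧
            distNearestInt ((n:ℝ) * θ - s) < ψ n})
        + volume (⋃ n₀ ∈ Finset.Ico (q (m+2)) (q (m+2) + q (m+2)),
            {s : ℝ | s ∈ Set.Icc (z:ℝ) ((z:ℝ)+1) ∧ distNearestInt ((n₀:ℝ) * θ - s) < R}) :=
        measure_union_le _ _
    _ ≤ (∑ n ∈ Ss, volume {s : ℝ | s ∈ Set.Icc (z:ℝ) ((z:ℝ)+1) ∧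
            distNearestInt ((n:ℝ) * θ - s) < ψ n})
        + ∑ n₀ ∈ Finset.Ico (q (m+2)) (q (m+2) + q (m+2)),
            volume {s : ℝ | s ∈ Set.Icc (z:ℝ) ((z:ℝ)+1) ∧ distNearestInt ((n₀:ℝ) * θ - s) < R} := by
        exact add_le_add (measure_biUnion_finset_le _ _) (measure_biUnion_finset_le _ _)
    _ ≤ (∑ n ∈ Ss, ENNReal.ofReal (6 * ψ n))
        + ∑ _n₀ ∈ Finset.Ico (q (m+2)) (q (m+2) + q (m+2)), ENNReal.ofReal (6 * R) := by
        apply add_le_add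
        · exact Finset.sum_le_sum (fun n _ => window_bound _ _ _ (hψpos n))
        · exact Finset.sum_le_sum (fun n₀ _ => window_bound _ _ _ hRpos)
    _ ≤ ENNReal.ofReal (6 * Bsum θ ψ q (m+2))
        + ENNReal.ofReal ((q (m+2):ℝ) * (6 * R)) := by
        apply add_le_add
        · rw [← ENNReal.ofReal_sum_of_nonneg (fun n _ => by linarith [hψpos n])]
          apply ENNReal.ofReal_le_ofReal
          rw [← Finset.mul_sum]
          linarith [hsmallsum]
        · rw [Finset.sum_const, Nat.card_Ico, nsmul_eq_mul]
          have hcard : q (m+2) + q (m+2) - q (m+2) = q (m+2) := by omega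
          rw [hcard, ← ENNReal.ofReal_natCast (q (m+2)),
            ← ENNReal.ofReal_mul (by positivity)]
    _ ≤ ENNReal.ofReal (12 * (Bsum θ ψ q m + Bsum θ ψ q (m+1) + Bsum θ ψ q (m+2))) := by
        have hB2nn : 0 ≤ Bsum θ ψ q (m+2) :=
          Finset.sum_nonneg (fun n _ => le_min (hψpos n).le (dni_nonneg _))
        rw [← ENNReal.ofReal_add (by linarith) ?hnn]
        · apply ENNReal.ofReal_le_ofReal
          rw [hqR]
          linarith [hbig1, hbig2]
        case hnn =>
          rw [hqR]
          have h1 : 0 ≤ (c:ℝ) * dseq θ q (m+2) := by positivity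
          have h2 : 0 ≤ (q (m+2):ℝ) * ψ (q (m+2)) := by positivity
          linarith

end Main

theorem convergence_part
    (θ : ℝ) (hθ : Irrational θ) (q : ℕ → ℕ)
    (hq : ∀ k, (q k : ℝ) = (GenContFract.of θ).dens k)
    (ψ : ℕ → ℝ) (hψpos : ∀ n, 0 < ψ n) (hψmono : ∀ m n, m ≤ n → ψ n ≤ ψ m)
    (hconv : Summable fun k =>
      ∑ n ∈ Finset.Ico (q k) (q (k + 1)), min (ψ n) (distNearestInt ((q k : ℝ) * θ))) :
    ∀ᵐ s ∂(volume : Measure ℝ),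
      {n : ℕ | distNearestInt ((n : ℝ) * θ - s) < ψ n}.Finite := by
  classical
  have hBsum : Summable (Bsum θ ψ q) := by
    exact hconv
  have hBnn : ∀ k, 0 ≤ Bsum θ ψ q k :=
    fun k => Finset.sum_nonneg (fun n _ => le_min (hψpos n).le (dni_nonneg _))
  set Dp : ℕ → ℝ := fun m => Bsum θ ψ q m + Bsum θ ψ q (m+1) + Bsum θ ψ q (m+2) with hDp
  have hDpsum : Summable Dp :=
    (hBsum.add ((summable_nat_add_iff 1).2 hBsum)).add ((summable_nat_add_iff 2).2 hBsum)
  have htend : Tendsto (Bsum θ ψ q) atTop (𝓝 0) := hBsum.tendsto_atTop_zero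
  obtain ⟨N, hN⟩ :=
    Filter.eventually_atTop.mp (htend.eventually_lt_const (by norm_num : (0:ℝ) < 1/8))
  set K₀ : ℕ := max N 1 with hK₀
  have hgood : ∀ m, K₀ ≤ m → ψ (q (m+2)) < min (dseq θ q m) (dseq θ q (m+1)) := by
    intro m hm
    by_contra hcon
    push_neg at hcon
    have hb := bad_lower hθ hq hψmono m (le_trans (le_max_right N 1) hm) hcon
    have h1 := hN m (le_trans (le_max_left N 1) hm)
    have h2 := hN (m+1) (le_trans (le_max_left N 1) (by omega))
    linarith
  have hjfib : ∀ j : ℕ, j ≤ q j := by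
    intro j
    have h1 : j ≤ Nat.fib (j+1) := by
      induction j with
      | zero => simp
      | succ n ih =>
          rcases Nat.eq_zero_or_pos n with h|h
          · subst h; decide
          · have hf : 1 ≤ Nat.fib n := Nat.fib_pos.mpr h
            have h2 : Nat.fib (n+2) = Nat.fib n + Nat.fib (n+1) := Nat.fib_add_two
            have h3 : Nat.fib (n+1+1) = Nat.fib (n+2) := rfl
            omega
    exact le_trans h1 (cf_fib_le hθ hq j)
  have hwin : ∀ z : ℤ,
      volume ({s : ℝ | ¬ {n : ℕ | distNearestInt ((n:ℝ)*θ - s) < ψ n}.Finite}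
        ∩ Set.Icc (z:ℝ) ((z:ℝ)+1)) = 0 := by
    intro z
    set G : ℕ → Set ℝ := fun k => {s : ℝ | s ∈ Set.Icc (z:ℝ) ((z:ℝ)+1) ∧
      ∃ n, n ∈ Finset.Ico (q k) (q (k+1)) ∧ distNearestInt ((n:ℝ)*θ - s) < ψ n} with hG
    have hsub : ∀ K : ℕ,
        ({s : ℝ | ¬ {n : ℕ | distNearestInt ((n:ℝ)*θ - s) < ψ n}.Finite}
          ∩ Set.Icc (z:ℝ) ((z:ℝ)+1)) ⊆ ⋃ j : ℕ, G (j + (K₀ + K) + 2) := by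
      intro K s hs
      obtain ⟨hbad, hsI⟩ := hs
      have hinf : {n : ℕ | distNearestInt ((n:ℝ)*θ - s) < ψ n}.Infinite := hbad
      obtain ⟨n, hnmem, hngt⟩ := hinf.exists_gt (q (K₀ + K + 2))
      have hP : q (K₀+K+2) ≤ n := hngt.le
      have hPle : K₀+K+2 ≤ n := le_trans (hjfib _) hP
      set k := Nat.findGreatest (fun j => q j ≤ n) n with hk
      have h1 : q k ≤ n := Nat.findGreatest_spec (P := fun j => q j ≤ n) (n := n) hPle hP
      have h2 : K₀+K+2 ≤ k := Nat.le_findGreatest (P := fun j => q j ≤ n) (n := n) hPle hP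
      have hkn : k ≤ n := Nat.findGreatest_le n
      have h3 : n < q (k+1) := by
        rcases eq_or_lt_of_le hkn with he|hl
        · have hq1 : n + 1 ≤ q (n+1) := hjfib (n+1)
          rw [he]
          omega
        · have hng := Nat.findGreatest_is_greatest (P := fun j => q j ≤ n)
            (by omega : Nat.findGreatest (fun j => q j ≤ n) n < k+1) (by omega : k+1 ≤ n)
          omega
      refine Set.mem_iUnion.mpr ⟨k - (K₀+K) - 2, ?_⟩
      have he2 : k - (K₀+K) - 2 + (K₀+K) + 2 = k := by omega
      rw [he2]
      exact ⟨hsI, n, Finset.mem_Ico.mpr ⟨h1, h3⟩, hnmem⟩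
    have hvolK : ∀ K : ℕ,
        volume ({s : ℝ | ¬ {n : ℕ | distNearestInt ((n:ℝ)*θ - s) < ψ n}.Finite}
          ∩ Set.Icc (z:ℝ) ((z:ℝ)+1))
        ≤ ENNReal.ofReal (12 * ∑' j : ℕ, Dp (j + (K₀+K))) := by
      intro K
      have hsummK : Summable (fun j : ℕ => Dp (j + (K₀+K))) :=
        (summable_nat_add_iff (K₀+K)).2 hDpsum
      calc volume ({s : ℝ | ¬ {n : ℕ | distNearestInt ((n:ℝ)*θ - s) < ψ n}.Finite}
            ∩ Set.Icc (z:ℝ) ((z:ℝ)+1))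
          ≤ volume (⋃ j : ℕ, G (j + (K₀+K) + 2)) := measure_mono (hsub K)
        _ ≤ ∑' j : ℕ, volume (G (j + (K₀+K) + 2)) := measure_iUnion_le _
        _ ≤ ∑' j : ℕ, ENNReal.ofReal (12 * Dp (j + (K₀+K))) := by
            apply ENNReal.tsum_le_tsum
            intro j
            have hg := hgood (j + (K₀+K)) (by omega)
            exact block_bound hθ hq hψpos hψmono z (j + (K₀+K)) hg
        _ = ENNReal.ofReal (12 * ∑' j : ℕ, Dp (j + (K₀+K))) := by
            rw [← ENNReal.ofReal_tsum_of_nonneg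
              (fun j => by
                have h1 := hBnn (j+(K₀+K))
                have h2 := hBnn (j+(K₀+K)+1)
                have h3 := hBnn (j+(K₀+K)+2)
                simp only [hDp]
                linarith)
              (hsummK.mul_left 12)]
            rw [tsum_mul_left]
    have hlim0 := tendsto_sum_nat_add Dp
    have hlim1 : Tendsto (fun i : ℕ => ENNReal.ofReal (12 * ∑' j : ℕ, Dp (j + i)))
        atTop (𝓝 0) := by
      have h12 : Tendsto (fun i : ℕ => 12 * ∑' j : ℕ, Dp (j + i)) atTop (𝓝 (12 * 0)) :=
        hlim0.const_mul 12
      rw [mul_zero] at h12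
      have := ENNReal.tendsto_ofReal h12
      rwa [ENNReal.ofReal_zero] at this
    have hcompf : Tendsto (fun K : ℕ => K₀ + K) atTop atTop :=
      tendsto_atTop_mono (fun K => Nat.le_add_left K K₀) tendsto_id
    have hfinal : volume ({s : ℝ | ¬ {n : ℕ | distNearestInt ((n:ℝ)*θ - s) < ψ n}.Finite}
        ∩ Set.Icc (z:ℝ) ((z:ℝ)+1)) ≤ 0 :=
      ge_of_tendsto' (hlim1.comp hcompf) hvolK
    exact le_zero_iff.mp hfinal
  rw [ae_iff]
  have hc : {s : ℝ | ¬ {n : ℕ | distNearestInt ((n:ℝ)*θ - s) < ψ n}.Finite}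
      ⊆ ⋃ z : ℤ, ({s : ℝ | ¬ {n : ℕ | distNearestInt ((n:ℝ)*θ - s) < ψ n}.Finite}
        ∩ Set.Icc (z:ℝ) ((z:ℝ)+1)) := by
    intro s hs
    refine Set.mem_iUnion.mpr ⟨⌊s⌋, hs, Int.floor_le s, by push_cast; linarith [Int.lt_floor_add_one s]⟩
  exact measure_mono_null hc (measure_iUnion_null hwin)
end

section
/- Let θ be irrational and T : ℝ/ℤ → ℝ/ℤ the rotation x ↦ x + θ. For an interval I ⊆ ℝ/ℤ, any x ∈ ℝ/ℤ, and any convergent denominator q_k of θ, the number of n with 0 ≤ n < q_k and T^n x ∈ I is at most q_k·μ(I) + 2, where μ is Haar measure. -/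
open MeasureTheory Filter
open scoped ENNReal Classical

section aux
open GenContFract

/-- non-termination for irrationals -/
lemma not_terminatedAt_of_irrational {θ : ℝ} (hθ : Irrational θ) (n : ℕ) :
    ¬(GenContFract.of θ).TerminatedAt n := by
  intro h
  have hterm : (GenContFract.of θ).Terminates := ⟨n, h⟩
  obtain ⟨q, hq⟩ := (GenContFract.terminates_iff_rat θ).mp hterm
  exact hθ ⟨q, hq.symm⟩

lemma contsAux_int {θ : ℝ} (hθ : Irrational θ) :
    ∀ n : ℕ, (∃ P : ℤ, ((GenContFract.of θ).contsAux n).a = (P : ℝ)) ∧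
      (∃ Q : ℤ, ((GenContFract.of θ).contsAux n).b = (Q : ℝ)) := by
  have key : ∀ n : ℕ,
      ((∃ P : ℤ, ((GenContFract.of θ).contsAux n).a = (P : ℝ)) ∧
        (∃ Q : ℤ, ((GenContFract.of θ).contsAux n).b = (Q : ℝ))) ∧
      ((∃ P : ℤ, ((GenContFract.of θ).contsAux (n+1)).a = (P : ℝ)) ∧
        (∃ Q : ℤ, ((GenContFract.of θ).contsAux (n+1)).b = (Q : ℝ))) := by
    intro n
    induction n with
    | zero =>
      constructor
      · rw [GenContFract.zeroth_contAux_eq_one_zero]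
        exact ⟨⟨1, by norm_num⟩, ⟨0, by norm_num⟩⟩
      · rw [GenContFract.first_contAux_eq_h_one]
        exact ⟨⟨⌊θ⌋, by simp [GenContFract.of_h_eq_floor]⟩, ⟨1, by norm_num⟩⟩
    | succ m ih =>
      refine ⟨ih.2, ?_⟩
      obtain ⟨gp, s_eq⟩ : ∃ gp, (GenContFract.of θ).s.get? m = some gp :=
        Option.ne_none_iff_exists'.1 (not_terminatedAt_of_irrational hθ m)
      have ha : gp.a = 1 := of_partNum_eq_one (partNum_eq_s_a s_eq)
      obtain ⟨z, hz⟩ : ∃ z : ℤ, gp.b = (z : ℝ) :=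
        exists_int_eq_of_partDen (partDen_eq_s_b s_eq)
      have hrec := GenContFract.contsAux_recurrence s_eq rfl rfl
      obtain ⟨⟨P0, hP0⟩, ⟨Q0, hQ0⟩⟩ := ih.1
      obtain ⟨⟨P1, hP1⟩, ⟨Q1, hQ1⟩⟩ := ih.2
      rw [hrec]
      refine ⟨⟨z * P1 + P0, ?_⟩, ⟨z * Q1 + Q0, ?_⟩⟩ <;>
        simp [ha, hz, hP0, hP1, hQ0, hQ1] <;> push_cast <;> ring
  exact fun n => (key n).1

/-- main continued-fraction input: an integer numerator `P` coprime to `q k` with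
`|θ - P / q k| ≤ 1 / (q k)^2`, and `1 ≤ q k`. -/
lemma convergent_props {θ : ℝ} (hθ : Irrational θ) (q : ℕ → ℕ)
    (hq : ∀ k, (q k : ℝ) = (GenContFract.of θ).dens k) (k : ℕ) :
    1 ≤ q k ∧ ∃ P : ℤ, IsCoprime P ((q k : ℤ)) ∧
      |θ - (P : ℝ) / (q k : ℝ)| ≤ 1 / ((q k : ℝ))^2 := by
  have hnt := not_terminatedAt_of_irrational hθ
  -- q k ≥ 1
  have hfib : ((Nat.fib (k+1) : ℝ)) ≤ (GenContFract.of θ).dens k :=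
    GenContFract.succ_nth_fib_le_of_nth_den (Or.inr (hnt _))
  have hfib1 : (1 : ℝ) ≤ (GenContFract.of θ).dens k := by
    refine le_trans ?_ hfib
    exact_mod_cast Nat.one_le_iff_ne_zero.mpr (Nat.fib_pos.mpr (Nat.succ_pos k)).ne'
  have hq1 : 1 ≤ q k := by
    have : (1:ℝ) ≤ (q k : ℝ) := by rw [hq k]; exact hfib1
    exact_mod_cast this
  refine ⟨hq1, ?_⟩
  -- numerator is an integer
  obtain ⟨P, hP⟩ := (contsAux_int hθ (k+1)).1
  have hnum : (GenContFract.of θ).nums k = (P : ℝ) := by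
    rw [GenContFract.num_eq_conts_a, GenContFract.nth_cont_eq_succ_nth_contAux]; exact hP
  refine ⟨P, ?_, ?_⟩
  · -- coprimality via determinant
    set s : SimpContFract ℝ := ⟨GenContFract.of θ, GenContFract.of_isSimpContFract θ⟩ with hs
    have hdet := SimpContFract.determinant (s := s) (n := k) (hnt k)
    obtain ⟨P', hP'⟩ := (contsAux_int hθ (k+2)).1
    have hnum' : (GenContFract.of θ).nums (k+1) = (P' : ℝ) := by
      rw [GenContFract.num_eq_conts_a, GenContFract.nth_cont_eq_succ_nth_contAux]; exact hP'
    obtain ⟨Q', hQ'⟩ := (contsAux_int hθ (k+2)).2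
    have hden' : (GenContFract.of θ).dens (k+1) = (Q' : ℝ) := by
      rw [GenContFract.den_eq_conts_b, GenContFract.nth_cont_eq_succ_nth_contAux]; exact hQ'
    have hcoe : ((s : GenContFract ℝ)) = GenContFract.of θ := rfl
    rw [hcoe, hnum, hnum', hden', ← hq k] at hdet
    have hint : P * Q' - (q k : ℤ) * P' = (-1)^(k+1) := by
      have := hdet
      exact_mod_cast this
    rcases Nat.even_or_odd (k+1) with he | ho
    · refine ⟨Q', -P', ?_⟩
      have h1 : ((-1:ℤ))^(k+1) = 1 := (Even.neg_one_pow he)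
      rw [h1] at hint; linarith [hint]
    · refine ⟨-Q', P', ?_⟩
      have h1 : ((-1:ℤ))^(k+1) = -1 := (Odd.neg_one_pow ho)
      rw [h1] at hint; linarith [hint]
  · -- approximation
    have habs := GenContFract.abs_sub_convs_le (v := θ) (n := k) (hnt k)
    have hconv : (GenContFract.of θ).convs k = (P:ℝ) / (q k : ℝ) := by
      rw [GenContFract.conv_eq_num_div_den, hnum, hq k]
    have hmono : (GenContFract.of θ).dens k ≤ (GenContFract.of θ).dens (k+1) :=
      GenContFract.of_den_mono
    have hqpos : (0:ℝ) < (q k : ℝ) := by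
      have : (1:ℝ) ≤ (q k:ℝ) := by exact_mod_cast hq1
      linarith
    have h2 : 1 / ((GenContFract.of θ).dens k * (GenContFract.of θ).dens (k+1))
        ≤ 1 / ((q k : ℝ))^2 := by
      have hd : (0:ℝ) < (GenContFract.of θ).dens k := by rw [← hq k]; exact hqpos
      apply one_div_le_one_div_of_le
      · positivity
      · have hm : (q k:ℝ) ≤ (GenContFract.of θ).dens (k+1) := by rw [hq k]; exact hmono
        rw [← hq k]; nlinarith [hqpos, hm]
    calc |θ - (P:ℝ)/(q k:ℝ)| = |θ - (GenContFract.of θ).convs k| := by rw [hconv]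
      _ ≤ _ := habs
      _ ≤ _ := h2
end aux


lemma count_lemma (Q : ℕ) (hQ : 1 ≤ Q) (P : ℤ) (hcop : IsCoprime P ((Q:ℤ)))
    (θ δ β r : ℝ) (hδ : θ = (P:ℝ)/(Q:ℝ) + δ) (hδab : |δ| ≤ 1/((Q:ℝ))^2) (hr : 0 < r)
    (hsmall : (Q:ℝ)*(2*r) + 2 < (Q:ℝ)) :
    (((Finset.range Q).filter
        (fun n : ℕ => |(β + (n:ℝ)*θ) - round (β + (n:ℝ)*θ)| < r)).card : ℝ)
      ≤ (Q:ℝ)*(2*r) + 2 := by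
  have hQR : (1:ℝ) ≤ (Q:ℝ) := by exact_mod_cast hQ
  have hQpos : (0:ℝ) < (Q:ℝ) := by linarith
  set D : ℝ := max 0 (((Q:ℝ)-1)*δ) with hD
  set A : ℝ := -r - D with hA
  set L : ℝ := 2*r + ((Q:ℝ)-1)*|δ| with hL
  set e : ℝ := (Q:ℝ)*(β - A) with he
  set F : ℕ → ℤ := fun n => (⌊e⌋ + (n:ℤ)*P) % (Q:ℤ) with hF
  set S := (Finset.range Q).filter
      (fun n : ℕ => |(β + (n:ℝ)*θ) - round (β + (n:ℝ)*θ)| < r) with hS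
  have hQL : (Q:ℝ)*L ≤ (Q:ℝ)*(2*r) + 1 := by
    have h1 : (Q:ℝ)*(((Q:ℝ)-1)*|δ|) ≤ 1 := by
      have h2 : (Q:ℝ)*(((Q:ℝ)-1)*|δ|) ≤ (Q:ℝ)*(((Q:ℝ)-1)*(1/(Q:ℝ)^2)) := by
        have := abs_nonneg δ
        apply mul_le_mul_of_nonneg_left _ hQpos.le
        apply mul_le_mul_of_nonneg_left hδab (by linarith)
      have h3 : (Q:ℝ)*(((Q:ℝ)-1)*(1/(Q:ℝ)^2)) = ((Q:ℝ)-1)/(Q:ℝ) := by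
        field_simp
      rw [h3] at h2
      refine h2.trans ?_
      rw [div_le_one hQpos]; linarith
    have h4 : (Q:ℝ)*(2*r + ((Q:ℝ)-1)*|δ|) = (Q:ℝ)*(2*r) + (Q:ℝ)*(((Q:ℝ)-1)*|δ|) := by ring
    rw [hL, h4]; linarith [h1]
  -- key claim
  have key : ∀ n ∈ S, 0 ≤ F n ∧ (F n : ℝ) ≤ (Q:ℝ)*L := by
    intro n hn
    rw [hS, Finset.mem_filter, Finset.mem_range] at hn
    obtain ⟨hnQ, habs⟩ := hn
    set j : ℤ := round (β + (n:ℝ)*θ) with hj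
    rw [abs_lt] at habs
    have hn1 : (n:ℝ) ≤ (Q:ℝ) - 1 := by
      have : (n:ℝ) + 1 ≤ (Q:ℝ) := by exact_mod_cast hnQ
      linarith
    have hnn : (0:ℝ) ≤ (n:ℝ) := Nat.cast_nonneg n
    have hsplit : β + (n:ℝ)*θ = (β + (n:ℝ)*(P:ℝ)/(Q:ℝ)) + (n:ℝ)*δ := by
      rw [hδ]; ring
    -- bounds for nδ
    have hup : (n:ℝ)*δ ≤ D := by
      rcases le_or_gt 0 δ with h|h
      · exact le_trans (mul_le_mul_of_nonneg_right hn1 h) (le_max_right _ _)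
      · exact le_trans (mul_nonpos_of_nonneg_of_nonpos hnn h.le) (le_max_left _ _)
    have hdown : D - ((Q:ℝ)-1)*|δ| ≤ (n:ℝ)*δ := by
      rcases le_or_gt 0 δ with h|h
      · have hDD : D = ((Q:ℝ)-1)*δ := max_eq_right (mul_nonneg (by linarith) h)
        rw [hDD, abs_of_nonneg h]
        have : (0:ℝ) ≤ (n:ℝ)*δ := mul_nonneg hnn h
        linarith
      · have hDD : D = 0 := max_eq_left (mul_nonpos_of_nonneg_of_nonpos (by linarith) h.le)
        rw [hDD, abs_of_neg h]
        have : ((Q:ℝ)-1)*δ ≤ (n:ℝ)*δ := mul_le_mul_of_nonpos_right hn1 h.le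
        linarith
    have hlow : A < β + (n:ℝ)*(P:ℝ)/(Q:ℝ) - (j:ℝ) := by
      rw [hA]; linarith [habs.1, hsplit, hup]
    have hhigh : β + (n:ℝ)*(P:ℝ)/(Q:ℝ) - (j:ℝ) < A + L := by
      rw [hA, hL]; linarith [habs.2, hsplit, hdown]
    -- multiply by Q
    have hmul : (0:ℝ) < e + (n:ℝ)*(P:ℝ) - (j:ℝ)*(Q:ℝ) ∧
        e + (n:ℝ)*(P:ℝ) - (j:ℝ)*(Q:ℝ) < (Q:ℝ)*L := by
      constructor
      · have := sub_pos.mpr hlow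
        have heq : e + (n:ℝ)*(P:ℝ) - (j:ℝ)*(Q:ℝ)
            = (Q:ℝ) * ((β + (n:ℝ)*(P:ℝ)/(Q:ℝ) - (j:ℝ)) - A) := by
          rw [he]; field_simp; ring
        rw [heq]; positivity
      · have heq : e + (n:ℝ)*(P:ℝ) - (j:ℝ)*(Q:ℝ)
            = (Q:ℝ) * ((β + (n:ℝ)*(P:ℝ)/(Q:ℝ) - (j:ℝ)) - A) := by
          rw [he]; field_simp; ring
        rw [heq]
        have hlt : (β + (n:ℝ)*(P:ℝ)/(Q:ℝ) - (j:ℝ)) - A < L := by linarith [hhigh]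
        exact mul_lt_mul_of_pos_left hlt hQpos
    set g : ℤ := ⌊e⌋ + (n:ℤ)*P - j*(Q:ℤ) with hg
    have hfr : e + (n:ℝ)*(P:ℝ) - (j:ℝ)*(Q:ℝ) = (g:ℝ) + Int.fract e := by
      rw [hg]; push_cast; simp only [Int.fract]; ring
    have hfr0 : 0 ≤ Int.fract e := Int.fract_nonneg e
    have hfr1 : Int.fract e < 1 := Int.fract_lt_one e
    have hg0 : 0 ≤ g := by
      have h1 : (-1:ℝ) < (g:ℝ) := by
        rw [hfr] at hmul; linarith [hmul.1]
      have h2 : (-1:ℤ) < g := by exact_mod_cast h1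
      omega
    have hgle : (g:ℝ) ≤ (Q:ℝ)*L := by
      rw [hfr] at hmul; linarith [hmul.2]
    have hgQ : g < (Q:ℤ) := by
      have : (g:ℝ) < (Q:ℝ) := lt_of_le_of_lt hgle (by linarith)
      exact_mod_cast this
    have hFg : F n = g := by
      have hsplit2 : ⌊e⌋ + (n:ℤ)*P = g + j*(Q:ℤ) := by rw [hg]; ring
      show (⌊e⌋ + (n:ℤ)*P) % (Q:ℤ) = g
      rw [hsplit2, Int.add_mul_emod_self_right]
      exact Int.emod_eq_of_lt hg0 hgQ
    rw [hFg]
    exact ⟨hg0, hgle⟩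
  -- injectivity
  have hinj : ∀ n ∈ S, ∀ m ∈ S, F n = F m → n = m := by
    intro n hn m hm hFnm
    rw [hS, Finset.mem_filter, Finset.mem_range] at hn hm
    have hmod : ((n:ℤ)*P) % (Q:ℤ) = ((m:ℤ)*P) % (Q:ℤ) := by
      have h1 : (⌊e⌋ + (n:ℤ)*P) % (Q:ℤ) = (⌊e⌋ + (m:ℤ)*P) % (Q:ℤ) := hFnm
      have := Int.ModEq.add_left_cancel' ⌊e⌋ (a := (n:ℤ)*P) (b := (m:ℤ)*P) h1
      exact this
    have hdvd : (Q:ℤ) ∣ ((m:ℤ) - (n:ℤ))*P := by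
      have h2 : (Q:ℤ) ∣ ((m:ℤ)*P - (n:ℤ)*P) := Int.ModEq.dvd hmod
      have : (m:ℤ)*P - (n:ℤ)*P = ((m:ℤ) - (n:ℤ))*P := by ring
      rwa [this] at h2
    have hdvd2 : (Q:ℤ) ∣ ((m:ℤ) - (n:ℤ)) := (hcop.symm).dvd_of_dvd_mul_right hdvd
    have habs : |(m:ℤ) - (n:ℤ)| < (Q:ℤ) := by
      rw [abs_lt]; omega
    have := Int.eq_zero_of_abs_lt_dvd hdvd2 habs
    omega
  -- conclude
  have hcard : S.card ≤ ⌊(Q:ℝ)*L⌋₊ + 1 := by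
    have := Finset.card_le_card_of_injOn (t := Finset.range (⌊(Q:ℝ)*L⌋₊ + 1)) (fun n => (F n).toNat)
      (fun n hn => by
        have h := key n hn
        rw [Finset.mem_coe, Finset.mem_range, Nat.lt_succ_iff]
        apply Nat.le_floor
        show (((F n).toNat : ℕ) : ℝ) ≤ (Q:ℝ)*L
        rw [show (((F n).toNat : ℕ) : ℝ) = ((F n : ℤ) : ℝ) by exact_mod_cast Int.toNat_of_nonneg h.1]
        exact h.2)
      (fun n hn m hm hnm => by
        apply hinj n hn m hm
        have h1 := (key n hn).1
        have h2 := (key m hm).1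
        have h3 : (F n).toNat = (F m).toNat := hnm
        omega)
    simpa using this
  have hfl : (⌊(Q:ℝ)*L⌋₊ : ℝ) ≤ (Q:ℝ)*L := by
    apply Nat.floor_le
    have h0 : (0:ℝ) ≤ L := by
      have h5 : (0:ℝ) ≤ ((Q:ℝ)-1)*|δ| := mul_nonneg (by linarith) (abs_nonneg δ)
      rw [hL]; linarith
    exact mul_nonneg hQpos.le h0
  calc (S.card : ℝ) ≤ ((⌊(Q:ℝ)*L⌋₊ + 1 : ℕ) : ℝ) := by exact_mod_cast hcard
    _ ≤ (Q:ℝ)*L + 1 := by push_cast; linarith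
    _ ≤ (Q:ℝ)*(2*r) + 2 := by linarith

theorem denjoy_koksma_orbit_count
    (θ : ℝ) (hθ : Irrational θ) (q : ℕ → ℕ)
    (hq : ∀ k, (q k : ℝ) = (GenContFract.of θ).dens k)
    (x c : AddCircle (1 : ℝ)) (r : ℝ) (k : ℕ) :
    ((Finset.range (q k)).filter
        (fun n : ℕ => x + ((((n : ℕ) : ℝ) * θ : ℝ) : AddCircle (1 : ℝ)) ∈ Metric.ball c r)).card
      ≤ (q k : ℝ) * (volume (Metric.ball c r)).toReal + 2 := by
  obtain ⟨hq1, P, hcop, hPappr⟩ := convergent_props hθ q hq k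
  set Q := q k with hQdef
  rcases le_or_gt r 0 with hr | hr
  · rw [Metric.ball_eq_empty.mpr hr]
    simp only [Set.mem_empty_iff_false, Finset.filter_false, Finset.card_empty]
    push_cast
    positivity
  -- volume of the ball
  have hvol : (volume (Metric.ball c r)).toReal = min 1 (2*r) := by
    have h1 : volume (Metric.ball c r) = volume (Metric.closedBall c r) :=
      (measure_congr AddCircle.closedBall_ae_eq_ball).symm
    rw [h1, AddCircle.volume_closedBall, ENNReal.toReal_ofReal]
    exact le_min (by norm_num) (by linarith)
  rw [hvol]
  rcases le_or_gt ((Q:ℝ)) ((Q:ℝ) * min 1 (2*r) + 2) with htriv | hmain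
  · calc (((Finset.range Q).filter _).card : ℝ)
        ≤ ((Finset.range Q).card : ℝ) := by
          exact_mod_cast Finset.card_filter_le _ _
      _ = (Q:ℝ) := by rw [Finset.card_range]
      _ ≤ _ := htriv
  -- main case
  have h2r : 2*r ≤ 1 := by
    by_contra h
    push_neg at h
    rw [min_eq_left h.le] at hmain
    linarith
  rw [min_eq_right h2r] at hmain ⊢
  obtain ⟨x0, rfl⟩ : ∃ x0 : ℝ, (x0 : AddCircle (1:ℝ)) = x := Quotient.exists_rep x
  obtain ⟨c0, rfl⟩ : ∃ c0 : ℝ, (c0 : AddCircle (1:ℝ)) = c := Quotient.exists_rep c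
  set δ : ℝ := θ - (P:ℝ)/(Q:ℝ) with hδdef
  have hmem : ∀ n : ℕ,
      ((x0 : AddCircle (1:ℝ)) + (((n:ℝ) * θ : ℝ) : AddCircle (1:ℝ)) ∈
        Metric.ball ((c0 : ℝ) : AddCircle (1:ℝ)) r) ↔
      |((x0 - c0) + (n:ℝ)*θ) - round ((x0 - c0) + (n:ℝ)*θ)| < r := by
    intro n
    rw [Metric.mem_ball, dist_eq_norm]
    have hcoe : ((x0 : AddCircle (1:ℝ)) + (((n:ℝ) * θ : ℝ) : AddCircle (1:ℝ)))
        - ((c0 : ℝ) : AddCircle (1:ℝ))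
        = (((x0 - c0) + (n:ℝ)*θ : ℝ) : AddCircle (1:ℝ)) := by
      rw [show (x0 - c0) + (n:ℝ)*θ = (x0 + (n:ℝ)*θ) - c0 by ring,
        AddCircle.coe_sub, AddCircle.coe_add]
    rw [hcoe, UnitAddCircle.norm_eq]
  have hfilter : (Finset.range Q).filter
      (fun n : ℕ => (x0 : AddCircle (1:ℝ)) + (((n:ℝ) * θ : ℝ) : AddCircle (1:ℝ)) ∈
        Metric.ball ((c0 : ℝ) : AddCircle (1:ℝ)) r)
      = (Finset.range Q).filter
      (fun n : ℕ => |((x0 - c0) + (n:ℝ)*θ) - round ((x0 - c0) + (n:ℝ)*θ)| < r) := by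
    apply Finset.filter_congr
    intro n _
    simp only [hmem n]
  rw [hfilter]
  exact count_lemma Q hq1 P hcop θ δ (x0 - c0) r (by rw [hδdef]; ring) hPappr hr hmain
end

section
/- Let A_1, A_2, … be measurable subsets of a probability space such that there is a constant D with μ(A_k ∩ A_ℓ) ≤ μ(A_k)μ(A_ℓ) + D·2^{-(k-ℓ)/2}·μ(A_k) for all ℓ < k. If ∑_k μ(A_k) = ∞, then μ(limsup A_k) = 1. -/
open MeasureTheory Filter
open Finset
open scoped ENNReal Classical

noncomputable def rr : ℝ≥0∞ := (2 : ℝ≥0∞) ^ (-(1/2) : ℝ)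

lemma rr_lt_one : rr < 1 :=
  ENNReal.rpow_lt_one_of_one_lt_of_neg (by norm_num) (by norm_num)

noncomputable def cc : ℝ≥0∞ := (1 - rr)⁻¹

/-- Cauchy–Schwarz for lintegral of a function vanishing outside `U`. -/
lemma cs_aux {Ω : Type*} [MeasurableSpace Ω] (μ : Measure Ω)
    (f : Ω → ℝ≥0∞) (hf : Measurable f) {U : Set Ω} (hU : MeasurableSet U)
    (h0 : ∀ ω, ω ∉ U → f ω = 0) :
    (∫⁻ ω, f ω ∂μ) ^ 2 ≤ (∫⁻ ω, f ω ^ 2 ∂μ) * μ U := by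
  have hind : Measurable (U.indicator (fun _ => (1 : ℝ≥0∞))) :=
    measurable_const.indicator hU
  have hfg : ∀ ω, f ω = f ω * U.indicator (fun _ => (1 : ℝ≥0∞)) ω := by
    intro ω
    by_cases h : ω ∈ U
    · simp [Set.indicator_of_mem h]
    · simp [Set.indicator_of_notMem h, h0 ω h]
  have hconj : (2 : ℝ).HolderConjugate 2 := by
    rw [Real.holderConjugate_iff]; constructor <;> norm_num
  have := ENNReal.lintegral_mul_le_Lp_mul_Lq μ hconj hf.aemeasurable hind.aemeasurable
  have h1 : (∫⁻ ω, f ω ∂μ) ≤ (∫⁻ ω, f ω ^ (2:ℝ) ∂μ) ^ (1/(2:ℝ)) *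
      (∫⁻ ω, (U.indicator (fun _ => (1 : ℝ≥0∞)) ω) ^ (2:ℝ) ∂μ) ^ (1/(2:ℝ)) := by
    calc (∫⁻ ω, f ω ∂μ) = ∫⁻ ω, (f * U.indicator (fun _ => (1:ℝ≥0∞))) ω ∂μ := by
          apply lintegral_congr; intro ω; exact hfg ω
      _ ≤ _ := this
  have hindsq : ∀ ω, (U.indicator (fun _ => (1 : ℝ≥0∞)) ω) ^ (2:ℝ) =
      U.indicator (fun _ => (1 : ℝ≥0∞)) ω := by
    intro ω; by_cases h : ω ∈ U <;>
      simp [Set.indicator_of_mem, Set.indicator_of_notMem, h, ENNReal.rpow_two,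
        ENNReal.zero_rpow_of_pos]
  rw [lintegral_congr hindsq, lintegral_indicator hU _] at h1
  simp only [lintegral_const, Measure.restrict_apply, Set.univ_inter, one_mul, Measure.restrict_apply_univ] at h1
  have h2 : (∫⁻ ω, f ω ∂μ) ^ 2 ≤ ((∫⁻ ω, f ω ^ (2:ℝ) ∂μ) ^ (1/(2:ℝ)) * (μ U) ^ (1/(2:ℝ))) ^ 2 :=
    pow_le_pow_left' h1 2
  calc (∫⁻ ω, f ω ∂μ) ^ 2 ≤ _ := h2
    _ = (∫⁻ ω, f ω ^ (2:ℝ) ∂μ) * μ U := by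
        rw [mul_pow, ← ENNReal.rpow_natCast (_ ^ (1/(2:ℝ))) 2, ← ENNReal.rpow_natCast ((μ U) ^ (1/(2:ℝ))) 2,
          ← ENNReal.rpow_mul, ← ENNReal.rpow_mul]
        norm_num
    _ = (∫⁻ ω, f ω ^ 2 ∂μ) * μ U := by
        congr 1; apply lintegral_congr; intro ω; rw [ENNReal.rpow_two]

lemma cc_ne_top : cc ≠ ⊤ := by
  rw [cc, Ne, ENNReal.inv_eq_top, tsub_eq_zero_iff_le]
  exact not_le.2 rr_lt_one

lemma geom_sum_bound (K k : ℕ) :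
    ∑ l ∈ Finset.Ico K k, (2 : ℝ≥0∞) ^ (-(((k : ℝ) - l) / 2)) ≤ cc := by
  have hterm : ∀ l ∈ Finset.Ico K k, (2 : ℝ≥0∞) ^ (-(((k : ℝ) - l) / 2)) = rr ^ (k - l) := by
    intro l hl
    have hlk : l ≤ k := le_of_lt (Finset.mem_Ico.1 hl).2
    rw [rr, ← ENNReal.rpow_natCast ((2:ℝ≥0∞) ^ (-(1/2):ℝ)) (k - l), ← ENNReal.rpow_mul]
    congr 1
    rw [Nat.cast_sub hlk]
    ring
  rw [Finset.sum_congr rfl hterm]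
  have hinj : ∀ x ∈ Finset.Ico K k, ∀ y ∈ Finset.Ico K k, k - x = k - y → x = y := by
    intro x hx y hy h
    have hx' := (Finset.mem_Ico.1 hx).2
    have hy' := (Finset.mem_Ico.1 hy).2
    omega
  calc ∑ l ∈ Finset.Ico K k, rr ^ (k - l)
      = ∑ j ∈ (Finset.Ico K k).image (fun l => k - l), rr ^ j := (Finset.sum_image hinj).symm
    _ ≤ ∑' j : ℕ, rr ^ j := ENNReal.sum_le_tsum _
    _ = (1 - rr)⁻¹ := ENNReal.tsum_geometric rr
    _ = cc := rfl

lemma double_sum_bound {Ω : Type*} [MeasurableSpace Ω] (μ : Measure Ω) [IsProbabilityMeasure μ]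
    (A : ℕ → Set Ω) (D : ℝ≥0∞)
    (hcorr : ∀ ℓ k : ℕ, ℓ < k →
      μ (A k ∩ A ℓ) ≤ μ (A k) * μ (A ℓ) +
        D * (2 : ℝ≥0∞) ^ (-(((k : ℝ) - ℓ) / 2)) * μ (A k))
    (K N : ℕ) :
    ∑ k ∈ Ico K N, ∑ l ∈ Ico K N, μ (A k ∩ A l) ≤
      (∑ k ∈ Ico K N, μ (A k)) * (∑ k ∈ Ico K N, μ (A k)) +
        (1 + 2 * D * cc) * ∑ k ∈ Ico K N, μ (A k) := by
  set S := ∑ k ∈ Ico K N, μ (A k) with hS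
  set E : ℕ → ℕ → ℝ≥0∞ := fun k l =>
    (if k = l then μ (A k) else 0) +
    ((if l < k then D * (2 : ℝ≥0∞) ^ (-(((k : ℝ) - l) / 2)) else 0) * μ (A k) +
     (if k < l then D * (2 : ℝ≥0∞) ^ (-(((l : ℝ) - k) / 2)) else 0) * μ (A l)) with hE
  have hterm : ∀ k l : ℕ, μ (A k ∩ A l) ≤ μ (A k) * μ (A l) + E k l := by
    intro k l
    rcases lt_trichotomy k l with h | h | h
    · rw [Set.inter_comm]
      refine le_trans (hcorr k l h) ?_
      rw [hE]
      simp only [if_neg h.ne', if_neg (lt_asymm h), if_pos h, mul_comm (μ (A k)) (μ (A l))]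
      simp [add_comm, add_left_comm, add_assoc]
    · subst h
      rw [Set.inter_self]
      rw [hE]
      simp only [if_pos rfl, lt_irrefl, if_true, if_false, zero_mul, add_zero]
      exact le_add_self
    · refine le_trans (hcorr l k h) ?_
      rw [hE]
      simp only [if_neg h.ne', if_pos h, if_neg (lt_asymm h), zero_mul, add_zero]
      exact add_le_add_right (le_add_of_nonneg_left (zero_le : (0 : ℝ≥0∞) ≤ _)) _
  calc ∑ k ∈ Ico K N, ∑ l ∈ Ico K N, μ (A k ∩ A l)
      ≤ ∑ k ∈ Ico K N, ∑ l ∈ Ico K N, (μ (A k) * μ (A l) + E k l) := by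
        exact Finset.sum_le_sum fun k _ => Finset.sum_le_sum fun l _ => hterm k l
    _ = S * S + ∑ k ∈ Ico K N, ∑ l ∈ Ico K N, E k l := by
        simp only [Finset.sum_add_distrib]
        rw [← Finset.sum_mul_sum]
    _ ≤ S * S + (1 + 2 * D * cc) * S := by
        gcongr
        -- bound the E-sum
        have h1 : ∑ k ∈ Ico K N, ∑ l ∈ Ico K N, (if k = l then μ (A k) else 0) = S := by
          refine Finset.sum_congr rfl fun k hk => ?_
          rw [Finset.sum_ite_eq (Ico K N) k (fun _ => μ (A k)), if_pos hk]
        have h2 : ∀ k ∈ Ico K N,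
            ∑ l ∈ Ico K N, (if l < k then D * (2 : ℝ≥0∞) ^ (-(((k : ℝ) - l) / 2)) else 0) * μ (A k)
              ≤ D * cc * μ (A k) := by
          intro k hk
          rw [← Finset.sum_mul]
          gcongr
          rw [← Finset.sum_filter]
          calc ∑ l ∈ (Ico K N).filter (· < k), D * (2 : ℝ≥0∞) ^ (-(((k : ℝ) - l) / 2))
              ≤ ∑ l ∈ Ico K k, D * (2 : ℝ≥0∞) ^ (-(((k : ℝ) - l) / 2)) := by
                refine Finset.sum_le_sum_of_subset ?_
                intro l hl
                simp only [Finset.mem_filter, Finset.mem_Ico] at hl ⊢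
                exact ⟨hl.1.1, hl.2⟩
            _ = D * ∑ l ∈ Ico K k, (2 : ℝ≥0∞) ^ (-(((k : ℝ) - l) / 2)) := by
                rw [Finset.mul_sum]
            _ ≤ D * cc := by gcongr; exact geom_sum_bound K k
        calc ∑ k ∈ Ico K N, ∑ l ∈ Ico K N, E k l
            = S + (∑ k ∈ Ico K N, ∑ l ∈ Ico K N,
                (if l < k then D * (2 : ℝ≥0∞) ^ (-(((k : ℝ) - l) / 2)) else 0) * μ (A k) +
              ∑ k ∈ Ico K N, ∑ l ∈ Ico K N,
                (if k < l then D * (2 : ℝ≥0∞) ^ (-(((l : ℝ) - k) / 2)) else 0) * μ (A l)) := by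
              rw [hE]
              simp only [Finset.sum_add_distrib, h1]
          _ ≤ S + (D * cc * S + D * cc * S) := by
              gcongr
              · rw [hS, Finset.mul_sum]
                exact Finset.sum_le_sum h2
              · rw [Finset.sum_comm]
                rw [hS, Finset.mul_sum]
                exact Finset.sum_le_sum h2
          _ = (1 + 2 * D * cc) * S := by ring

set_option maxHeartbeats 1000000 in
theorem quasi_independent_borel_cantelli
    {Ω : Type*} [MeasurableSpace Ω] (μ : Measure Ω) [IsProbabilityMeasure μ]
    (A : ℕ → Set Ω) (hA : ∀ k, MeasurableSet (A k)) (D : ℝ≥0∞) (hD : 0 < D) (hD' : D ≠ ⊤)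
    (hcorr : ∀ ℓ k : ℕ, ℓ < k →
      μ (A k ∩ A ℓ) ≤ μ (A k) * μ (A ℓ) +
        D * (2 : ℝ≥0∞) ^ (-(((k : ℝ) - ℓ) / 2)) * μ (A k))
    (hdiv : ∑' k, μ (A k) = ⊤) :
    μ (⋂ K : ℕ, ⋃ k : ℕ, ⋃ _ : K ≤ k, A k) = 1 := by
  set C : ℝ≥0∞ := 1 + 2 * D * cc with hCdef
  have hC : C ≠ ⊤ := by
    rw [hCdef]
    exact ENNReal.add_ne_top.2 ⟨ENNReal.one_ne_top,
      ENNReal.mul_ne_top (ENNReal.mul_ne_top (by norm_num) hD') cc_ne_top⟩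
  have hUmeas : ∀ K : ℕ, MeasurableSet (⋃ k : ℕ, ⋃ _ : K ≤ k, A k) := fun K =>
    MeasurableSet.iUnion fun k => MeasurableSet.iUnion fun _ => hA k
  -- step 1: each tail union has measure 1
  have hU1 : ∀ K : ℕ, μ (⋃ k : ℕ, ⋃ _ : K ≤ k, A k) = 1 := by
    intro K
    set U := ⋃ k : ℕ, ⋃ _ : K ≤ k, A k with hUdef
    -- partial sums can be made arbitrarily large
    have hbig : ∀ M : ℝ≥0∞, M ≠ ⊤ → ∃ N : ℕ, M ≤ ∑ k ∈ Ico K N, μ (A k) := by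
      intro M hM
      have hB : ∑ k ∈ range K, μ (A k) ≠ ⊤ :=
        (ENNReal.sum_lt_top.2 fun i _ => measure_lt_top μ _).ne
      have hlt : M + ∑ k ∈ range K, μ (A k) < ∑' k, μ (A k) := by
        rw [hdiv]
        exact lt_top_iff_ne_top.2 (ENNReal.add_ne_top.2 ⟨hM, hB⟩)
      rw [ENNReal.tsum_eq_iSup_sum] at hlt
      obtain ⟨F, hF⟩ := lt_iSup_iff.1 hlt
      set N := max (F.sup id + 1) K with hNdef
      have hFN : F ⊆ range N := by
        intro n hn
        exact mem_range.2 (lt_of_lt_of_le (Nat.lt_succ_of_le (Finset.le_sup (f := id) hn))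
          (le_max_left _ _))
      have h2 : M + ∑ k ∈ range K, μ (A k) < ∑ k ∈ range N, μ (A k) :=
        lt_of_lt_of_le hF (Finset.sum_le_sum_of_subset hFN)
      have hKN : K ≤ N := le_max_right _ _
      have hsplit : ∑ k ∈ range K, μ (A k) + ∑ k ∈ Ico K N, μ (A k) =
          ∑ k ∈ range N, μ (A k) := by
        rw [Finset.range_eq_Ico, Finset.range_eq_Ico]
        exact Finset.sum_Ico_consecutive (fun k => μ (A k)) (Nat.zero_le K) hKN
      refine ⟨N, ?_⟩
      have h3 := h2.le
      rw [← hsplit, add_comm M] at h3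
      exact (ENNReal.add_le_add_iff_left hB).1 h3
    -- key inequality for each N
    have hkey : ∀ N : ℕ, (∑ k ∈ Ico K N, μ (A k)) * (∑ k ∈ Ico K N, μ (A k)) ≤
        ((∑ k ∈ Ico K N, μ (A k)) * (∑ k ∈ Ico K N, μ (A k)) +
          C * ∑ k ∈ Ico K N, μ (A k)) * μ U := by
      intro N
      set f : Ω → ℝ≥0∞ := fun ω => ∑ k ∈ Ico K N, (A k).indicator 1 ω with hfdef
      have hfmeas : Measurable f := by
        apply Finset.measurable_sum
        intro k _
        exact measurable_const.indicator (hA k)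
      have hf0 : ∀ ω, ω ∉ U → f ω = 0 := by
        intro ω hω
        apply Finset.sum_eq_zero
        intro k hk
        have : ω ∉ A k := by
          intro h
          exact hω (Set.mem_iUnion.2 ⟨k, Set.mem_iUnion.2 ⟨(Finset.mem_Ico.1 hk).1, h⟩⟩)
        simp [Set.indicator_of_notMem this]
      have hint : ∫⁻ ω, f ω ∂μ = ∑ k ∈ Ico K N, μ (A k) :=
        calc ∫⁻ ω, f ω ∂μ
            = ∑ k ∈ Ico K N, ∫⁻ ω, (A k).indicator 1 ω ∂μ :=
              lintegral_finset_sum _ (fun k _ => measurable_one.indicator (hA k))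
          _ = ∑ k ∈ Ico K N, μ (A k) :=
              Finset.sum_congr rfl fun k _ => lintegral_indicator_one (hA k)
      have hint2 : ∫⁻ ω, f ω ^ 2 ∂μ = ∑ k ∈ Ico K N, ∑ l ∈ Ico K N, μ (A k ∩ A l) := by
        have hpt : ∀ ω, f ω ^ 2 = ∑ k ∈ Ico K N, ∑ l ∈ Ico K N, (A k ∩ A l).indicator 1 ω := by
          intro ω
          rw [hfdef, sq, Finset.sum_mul_sum]
          refine Finset.sum_congr rfl fun k _ => Finset.sum_congr rfl fun l _ => ?_
          rw [Set.inter_indicator_one]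
          rfl
        calc ∫⁻ ω, f ω ^ 2 ∂μ
            = ∫⁻ ω, ∑ k ∈ Ico K N, ∑ l ∈ Ico K N, (A k ∩ A l).indicator 1 ω ∂μ :=
              lintegral_congr hpt
          _ = ∑ k ∈ Ico K N, ∫⁻ ω, ∑ l ∈ Ico K N, (A k ∩ A l).indicator 1 ω ∂μ :=
              lintegral_finset_sum _ (fun k _ => Finset.measurable_sum _
                (fun l _ => measurable_one.indicator ((hA k).inter (hA l))))
          _ = ∑ k ∈ Ico K N, ∑ l ∈ Ico K N, ∫⁻ ω, (A k ∩ A l).indicator 1 ω ∂μ :=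
              Finset.sum_congr rfl fun k _ => lintegral_finset_sum _
                (fun l _ => measurable_one.indicator ((hA k).inter (hA l)))
          _ = ∑ k ∈ Ico K N, ∑ l ∈ Ico K N, μ (A k ∩ A l) :=
              Finset.sum_congr rfl fun k _ => Finset.sum_congr rfl fun l _ =>
                lintegral_indicator_one ((hA k).inter (hA l))
      have := cs_aux μ f hfmeas (hUmeas K) hf0
      rw [hint, hint2, sq] at this
      refine le_trans this ?_
      gcongr
      exact double_sum_bound μ A D hcorr K N
    -- conclude μ U = 1
    refine le_antisymm prob_le_one ?_
    refine ENNReal.le_of_forall_pos_le_add ?_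
    intro ε hε hμU
    obtain ⟨N, hN⟩ := hbig (C / (ε : ℝ≥0∞) + 1)
      (ENNReal.add_ne_top.2 ⟨(ENNReal.div_lt_top hC (by exact_mod_cast hε.ne')).ne, ENNReal.one_ne_top⟩)
    set S := ∑ k ∈ Ico K N, μ (A k) with hSdef
    have hS0 : S ≠ 0 := by
      intro h
      rw [h] at hN
      simpa using hN
    have hSfin : S ≠ ⊤ := (ENNReal.sum_lt_top.2 fun i _ => measure_lt_top μ _).ne
    have h1 : S ≤ (S * μ U + C) := by
      have h2 := hkey N
      have h3 : S * S ≤ (S * μ U + C * μ U) * S := by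
        calc S * S ≤ (S * S + C * S) * μ U := h2
          _ = (S * μ U + C * μ U) * S := by ring
      have h4 := (ENNReal.mul_le_mul_iff_left hS0 hSfin).1 h3
      have hμU1 : μ U ≤ 1 := prob_le_one
      calc S ≤ S * μ U + C * μ U := h4
        _ ≤ S * μ U + C * 1 := by gcongr
        _ = S * μ U + C := by rw [mul_one]
    have h5 : (1 : ℝ≥0∞) ≤ μ U + C / S := by
      have h6 := ENNReal.div_le_div_right h1 S
      rw [ENNReal.div_self hS0 hSfin, ENNReal.add_div] at h6
      refine le_trans h6 ?_
      gcongr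
      exact ENNReal.div_le_of_le_mul (le_of_eq (mul_comm _ _))
    refine le_trans h5 ?_
    gcongr
    -- C / S ≤ ε
    rw [ENNReal.div_le_iff_le_mul (Or.inl hS0) (Or.inr (by exact_mod_cast hε.ne'))]
    have hCS : C / (ε : ℝ≥0∞) ≤ S := le_trans (self_le_add_right _ _) hN
    calc C = (ε : ℝ≥0∞) * (C / (ε : ℝ≥0∞)) :=
          (ENNReal.mul_div_cancel (by exact_mod_cast hε.ne') ENNReal.coe_ne_top).symm
      _ ≤ (ε : ℝ≥0∞) * S := by gcongr
  -- step 2: intersection of measure-one sets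
  rw [← prob_compl_eq_zero_iff (MeasurableSet.iInter hUmeas)]
  rw [Set.compl_iInter]
  exact measure_iUnion_null fun K => (prob_compl_eq_zero_iff (hUmeas K)).2 (hU1 K)
end

section
/- A badly approximable irrational θ satisfies Kurzweil's property: if θ is irrational and there exists c > 0 with ‖nθ‖ ≥ c/n for all n ≥ 1, then for every positive non-increasing sequence ψ with ∑_{n≥1} ψ(n) = ∞, one has ∑_{k≥0} ∑_{n=q_k}^{q_{k+1}-1} min(ψ(n), ‖q_k θ‖) = ∞. -/
open MeasureTheory Filter
open scoped ENNReal Classical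

/-- If `ψ` is positive non-increasing and `∑ min (ψ n) (c/n)` converges, then `∑ ψ`
converges. -/
lemma aux_summable_psi (c : ℝ) (hc : 0 < c) (ψ : ℕ → ℝ) (hψpos : ∀ n, 0 < ψ n)
    (hψmono : ∀ m n, m ≤ n → ψ n ≤ ψ m)
    (hg : Summable (fun n => min (ψ n) (c / n))) : Summable ψ := by
  set g : ℕ → ℝ := fun n => min (ψ n) (c / n) with hgdef
  -- first: eventually `ψ n ≤ c / n`
  have hev : ∃ N : ℕ, ∀ n ≥ N, ψ n ≤ c / n := by
    by_contra hcon
    push_neg at hcon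
    have htail : Tendsto (fun i => ∑' k, g (k + i)) atTop (nhds 0) := tendsto_sum_nat_add g
    have hc4 : (0 : ℝ) < c / 4 := by linarith
    obtain ⟨N₀, hN₀⟩ := (htail.eventually (eventually_lt_nhds hc4)).exists_forall_of_atTop
    obtain ⟨n, hn, hψn⟩ := hcon (2 * N₀ + 2)
    have hn2 : 2 ≤ n := by omega
    have hnpos : (0 : ℝ) < n := by positivity
    set N := n / 2 with hN
    have hNN₀ : N₀ ≤ N := by omega
    have hN1 : 1 ≤ N := by omega
    -- each term `g (k + N)` for `k ≤ n - N` is at least `c / n`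
    have hterm : ∀ k ∈ Finset.range (n - N + 1), c / n ≤ g (k + N) := by
      intro k hk
      simp only [Finset.mem_range] at hk
      have hkn : k + N ≤ n := by omega
      have hk1 : 1 ≤ k + N := by omega
      have h1 : c / n ≤ ψ (k + N) := le_of_lt (lt_of_le_of_lt
        (by exact_mod_cast div_le_div_of_nonneg_left hc.le hnpos (by exact_mod_cast le_refl n))
        (lt_of_lt_of_le hψn (hψmono _ _ hkn)))
      have h2 : c / n ≤ c / (k + N : ℕ) := by
        apply div_le_div_of_nonneg_left hc.le
        · exact_mod_cast hk1
        · exact_mod_cast hkn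
      exact le_min h1 h2
    have hgnonneg : ∀ m : ℕ, 0 ≤ g m := fun m =>
      le_min (hψpos m).le (div_nonneg hc.le (Nat.cast_nonneg m))
    have hsumle : ∑ k ∈ Finset.range (n - N + 1), g (k + N) ≤ ∑' k, g (k + N) := by
      apply Summable.sum_le_tsum _ (fun k _ => hgnonneg _)
      exact (summable_nat_add_iff N).mpr hg
    have hcard : ((n - N + 1 : ℕ) : ℝ) * (c / n) ≤ ∑ k ∈ Finset.range (n - N + 1), g (k + N) := by
      have := Finset.card_nsmul_le_sum (Finset.range (n - N + 1)) (fun k => g (k + N)) (c / n)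
        hterm
      simpa [nsmul_eq_mul] using this
    have hhalf : (n : ℝ) / 2 ≤ ((n - N + 1 : ℕ) : ℝ) := by
      have : n ≤ 2 * (n - N + 1) := by omega
      have h2 : (n : ℝ) ≤ 2 * ((n - N + 1 : ℕ) : ℝ) := by exact_mod_cast this
      linarith
    have hlb : c / 2 ≤ ∑' k, g (k + N) := by
      have h1 : (n : ℝ) / 2 * (c / n) ≤ ((n - N + 1 : ℕ) : ℝ) * (c / n) := by
        apply mul_le_mul_of_nonneg_right hhalf (div_nonneg hc.le hnpos.le)
      have h2 : (n : ℝ) / 2 * (c / n) = c / 2 := by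
        field_simp
      linarith
    have hub := hN₀ N hNN₀
    linarith
  obtain ⟨N, hN⟩ := hev
  have hgN : Summable (fun n => g (n + N)) := (summable_nat_add_iff N).mpr hg
  have heq : (fun n => g (n + N)) = fun n => ψ (n + N) := by
    funext n
    exact min_eq_left (hN (n + N) (Nat.le_add_left N n))
  rw [heq] at hgN
  exact (summable_nat_add_iff N).mp hgN

theorem badly_approximable_divergence
    (θ : ℝ) (hθ : Irrational θ) (q : ℕ → ℕ)
    (hq : ∀ k, (q k : ℝ) = (GenContFract.of θ).dens k)
    (c : ℝ) (hc : 0 < c) (hbad : ∀ n : ℕ, 1 ≤ n → c / n ≤ distNearestInt ((n : ℝ) * θ))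
    (ψ : ℕ → ℝ) (hψpos : ∀ n, 0 < ψ n) (hψmono : ∀ m n, m ≤ n → ψ n ≤ ψ m)
    (hdiv : ¬ Summable ψ) :
    ¬ Summable fun k =>
      ∑ n ∈ Finset.Ico (q k) (q (k + 1)), min (ψ n) (distNearestInt ((q k : ℝ) * θ)) := by
  intro hsum
  set F : ℕ → ℝ := fun k =>
    ∑ n ∈ Finset.Ico (q k) (q (k + 1)), min (ψ n) (distNearestInt ((q k : ℝ) * θ)) with hFdef
  have hdist_nonneg : ∀ x : ℝ, 0 ≤ distNearestInt x := fun x => abs_nonneg _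
  have hF0 : ∀ k, 0 ≤ F k := fun k =>
    Finset.sum_nonneg fun n _ => le_min (hψpos n).le (hdist_nonneg _)
  -- basic facts about q
  have hq0 : q 0 = 1 := by
    have h := hq 0
    rw [GenContFract.zeroth_den_eq_one] at h
    exact_mod_cast h
  have hmono : Monotone q := by
    apply monotone_nat_of_le_succ
    intro k
    have h : ((q k : ℝ)) ≤ (q (k + 1) : ℝ) := by
      rw [hq, hq]; exact GenContFract.of_den_mono
    exact_mod_cast h
  have hq1 : ∀ k, 1 ≤ q k := fun k => hq0 ▸ hmono (Nat.zero_le k)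
  -- q is unbounded
  have hterm : ∀ m, ¬ (GenContFract.of θ).TerminatedAt m := by
    intro m hm
    have : (GenContFract.of θ).Terminates := ⟨m, hm⟩
    rw [GenContFract.terminates_iff_rat] at this
    obtain ⟨r, hr⟩ := this
    exact hθ ⟨r, hr.symm⟩
  have hfib : ∀ k, Nat.fib (k + 1) ≤ q k := by
    intro k
    have h : ((Nat.fib (k + 1) : ℝ)) ≤ (GenContFract.of θ).dens k :=
      GenContFract.succ_nth_fib_le_of_nth_den (Or.inr (hterm _))
    rw [← hq] at h
    exact_mod_cast h
  have hunbdd : ∀ N : ℕ, ∃ K, N ≤ q K := by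
    intro N
    refine ⟨max N 5, ?_⟩
    calc N ≤ max N 5 := le_max_left _ _
      _ ≤ Nat.fib (max N 5) := Nat.le_fib_self (le_max_right _ _)
      _ ≤ Nat.fib (max N 5 + 1) := Nat.fib_le_fib_succ
      _ ≤ q (max N 5) := hfib _
  -- the comparison function
  set g : ℕ → ℝ := fun n => min (ψ n) (c / n) with hgdef
  have hgnonneg : ∀ m : ℕ, 0 ≤ g m := fun m =>
    le_min (hψpos m).le (div_nonneg hc.le (Nat.cast_nonneg m))
  -- block sums bound g
  have hblock : ∀ k, ∑ n ∈ Finset.Ico (q k) (q (k + 1)), g n ≤ F k := by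
    intro k
    apply Finset.sum_le_sum
    intro n hn
    rw [Finset.mem_Ico] at hn
    have hqk1 : (1 : ℝ) ≤ (q k : ℝ) := by exact_mod_cast hq1 k
    have hcn : c / n ≤ c / (q k : ℕ) := by
      apply div_le_div_of_nonneg_left hc.le
      · exact_mod_cast hq1 k
      · exact_mod_cast hn.1
    have hd : c / (q k : ℕ) ≤ distNearestInt ((q k : ℝ) * θ) := hbad (q k) (hq1 k)
    exact le_min (min_le_left _ _) ((min_le_right _ _).trans (hcn.trans hd))
  -- telescoping
  have htel : ∀ K, ∑ n ∈ Finset.Ico (q 0) (q K), g n =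
      ∑ k ∈ Finset.range K, ∑ n ∈ Finset.Ico (q k) (q (k + 1)), g n := by
    intro K
    induction K with
    | zero => simp
    | succ K ih =>
      rw [Finset.sum_range_succ, ← ih,
        Finset.sum_Ico_consecutive _ (hmono (Nat.zero_le K)) (hmono (Nat.le_succ K))]
  -- g is summable
  have hgsum : Summable g := by
    apply summable_of_sum_range_le hgnonneg (c := ∑' k, F k)
    intro n
    obtain ⟨K, hK⟩ := hunbdd n
    have h1 : ∑ i ∈ Finset.range n, g i ≤ ∑ i ∈ Finset.range (q K), g i :=
      Finset.sum_le_sum_of_subset_of_nonneg (Finset.range_subset_range.mpr hK)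
        (fun i _ _ => hgnonneg i)
    have hg0 : g 0 = 0 := by
      simp only [hgdef, Nat.cast_zero, div_zero]
      exact min_eq_right (hψpos 0).le
    have h2 : ∑ i ∈ Finset.range (q K), g i = ∑ i ∈ Finset.Ico (q 0) (q K), g i := by
      rw [Finset.range_eq_Ico, hq0]
      rcases Nat.eq_zero_or_pos (q K) with h | h
      · have := hq1 K; omega
      · rw [← Finset.sum_Ico_consecutive _ (Nat.zero_le 1) (hq1 K)]
        simp [hg0]
    have h3 : ∑ k ∈ Finset.range K, ∑ n ∈ Finset.Ico (q k) (q (k + 1)), g n ≤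
        ∑ k ∈ Finset.range K, F k := Finset.sum_le_sum fun k _ => hblock k
    have h4 : ∑ k ∈ Finset.range K, F k ≤ ∑' k, F k :=
      Summable.sum_le_tsum _ (fun k _ => hF0 k) hsum
    calc ∑ i ∈ Finset.range n, g i ≤ ∑ i ∈ Finset.range (q K), g i := h1
      _ = ∑ i ∈ Finset.Ico (q 0) (q K), g i := h2
      _ = ∑ k ∈ Finset.range K, ∑ n ∈ Finset.Ico (q k) (q (k + 1)), g n := htel K
      _ ≤ ∑ k ∈ Finset.range K, F k := h3
      _ ≤ ∑' k, F k := h4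
  exact hdiv (aux_summable_psi c hc ψ hψpos hψmono hgsum)
end

section
/- Let τ ≥ 1 and θ irrational with ‖nθ‖ ≥ c/n^τ for all n ≥ 1 and some c > 0, with convergent denominators q_k. If ψ is positive non-increasing with ∑_{n≥1} ψ(n)^τ = ∞, then ∑_{k≥0} ∑_{n=q_k}^{q_{k+1}-1} min(ψ(n), ‖q_k θ‖) = ∞. -/
open MeasureTheory Filter
open scoped ENNReal Classical

open GenContFract

variable {θ : ℝ}

lemma cfNotTerm (hθ : Irrational θ) (n : ℕ) : ¬(GenContFract.of θ).TerminatedAt n := by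
  intro h
  have ht : (GenContFract.of θ).Terminates := ⟨n, h⟩
  rw [GenContFract.terminates_iff_rat] at ht
  obtain ⟨q, rfl⟩ := ht
  exact hθ ⟨q, rfl⟩

lemma cfDensOne (θ : ℝ) : ∀ n, (1:ℝ) ≤ (GenContFract.of θ).dens n := by
  intro n
  induction n with
  | zero => simp [GenContFract.zeroth_den_eq_one]
  | succ n ih => exact ih.trans (GenContFract.of_den_mono)

lemma cfDensMono (θ : ℝ) {m n : ℕ} (h : m ≤ n) :
    (GenContFract.of θ).dens m ≤ (GenContFract.of θ).dens n := by
  induction h with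
  | refl => exact le_refl _
  | step _ ih => exact ih.trans (GenContFract.of_den_mono)

lemma cfDensRec (hθ : Irrational θ) (n : ℕ) :
    (GenContFract.of θ).dens n + (GenContFract.of θ).dens (n+1) ≤ (GenContFract.of θ).dens (n+2) := by
  obtain ⟨gp, s_eq⟩ : ∃ gp, (GenContFract.of θ).s.get? (n+1) = some gp :=
    Option.ne_none_iff_exists'.1 (cfNotTerm hθ (n+1))
  have ha : gp.a = 1 := of_partNum_eq_one (partNum_eq_s_a s_eq)
  have hb : (1:ℝ) ≤ gp.b := of_one_le_get?_partDen (partDen_eq_s_b s_eq)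
  have hrec := GenContFract.dens_recurrence s_eq rfl rfl
  rw [hrec, ha, one_mul]
  have h1 : (GenContFract.of θ).dens (n+1) ≤ gp.b * (GenContFract.of θ).dens (n+1) := by
    nlinarith [cfDensOne θ (n+1)]
  linarith

lemma cfNumsInt (hθ : Irrational θ) : ∀ n, ∃ z : ℤ, ((z:ℝ)) = (GenContFract.of θ).nums n := by
  have key : ∀ n, (∃ z : ℤ, ((z:ℝ)) = (GenContFract.of θ).nums n) ∧
      (∃ z : ℤ, ((z:ℝ)) = (GenContFract.of θ).nums (n+1)) := by
    intro n
    induction n with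
    | zero =>
      constructor
      · exact ⟨⌊θ⌋, by rw [GenContFract.zeroth_num_eq_h, GenContFract.of_h_eq_floor]⟩
      · obtain ⟨gp, s_eq⟩ : ∃ gp, (GenContFract.of θ).s.get? 0 = some gp :=
          Option.ne_none_iff_exists'.1 (cfNotTerm hθ 0)
        have ha : gp.a = 1 := of_partNum_eq_one (partNum_eq_s_a s_eq)
        obtain ⟨b, hbz⟩ : ∃ z : ℤ, gp.b = (z:ℝ) := exists_int_eq_of_partDen (partDen_eq_s_b s_eq)
        refine ⟨b * ⌊θ⌋ + 1, ?_⟩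
        rw [GenContFract.first_num_eq s_eq, ha, GenContFract.of_h_eq_floor]
        push_cast
        rw [← hbz]
    | succ n ih =>
      refine ⟨ih.2, ?_⟩
      obtain ⟨z1, hz1⟩ := ih.1
      obtain ⟨z2, hz2⟩ := ih.2
      obtain ⟨gp, s_eq⟩ : ∃ gp, (GenContFract.of θ).s.get? (n+1) = some gp :=
        Option.ne_none_iff_exists'.1 (cfNotTerm hθ (n+1))
      have ha : gp.a = 1 := of_partNum_eq_one (partNum_eq_s_a s_eq)
      obtain ⟨b, hbz⟩ : ∃ z : ℤ, gp.b = (z:ℝ) := exists_int_eq_of_partDen (partDen_eq_s_b s_eq)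
      refine ⟨b * z2 + z1, ?_⟩
      rw [GenContFract.nums_recurrence s_eq rfl rfl, ha, one_mul]
      push_cast
      rw [← hbz, hz1, hz2]
  exact fun n => (key n).1

lemma cfErrUpper (hθ : Irrational θ) (n : ℕ) :
    |θ * (GenContFract.of θ).dens n - (GenContFract.of θ).nums n| ≤ 1 / (GenContFract.of θ).dens (n+1) := by
  set g := GenContFract.of θ
  have h1 : |θ - g.convs n| ≤ 1 / (g.dens n * g.dens (n+1)) :=
    GenContFract.abs_sub_convs_le (cfNotTerm hθ n)
  have hd : (1:ℝ) ≤ g.dens n := cfDensOne θ n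
  have hd' : (1:ℝ) ≤ g.dens (n+1) := cfDensOne θ (n+1)
  have hdpos : (0:ℝ) < g.dens n := by linarith
  have hcv : g.convs n = g.nums n / g.dens n := GenContFract.conv_eq_num_div_den
  have key : θ * g.dens n - g.nums n = (θ - g.convs n) * g.dens n := by
    rw [hcv]; field_simp
  rw [key, abs_mul, abs_of_pos hdpos]
  calc |θ - g.convs n| * g.dens n ≤ (1 / (g.dens n * g.dens (n+1))) * g.dens n := by
        exact mul_le_mul_of_nonneg_right h1 (le_of_lt hdpos)
    _ = 1 / g.dens (n+1) := by field_simp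

lemma cfDet (hθ : Irrational θ) (n : ℕ) :
    |(GenContFract.of θ).nums n * (GenContFract.of θ).dens (n+1) -
      (GenContFract.of θ).dens n * (GenContFract.of θ).nums (n+1)| = 1 := by
  have h := SimpContFract.determinant (s := SimpContFract.of θ) (n := n) (cfNotTerm hθ n)
  rw [show ((SimpContFract.of θ : SimpContFract ℝ) : GenContFract ℝ) = GenContFract.of θ from rfl] at h
  rw [h, abs_pow, abs_neg, abs_one, one_pow]

lemma cfErrLower (hθ : Irrational θ) (n : ℕ) :
    1 / ((GenContFract.of θ).dens n + (GenContFract.of θ).dens (n+1)) ≤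
      |θ * (GenContFract.of θ).dens n - (GenContFract.of θ).nums n| := by
  set g := GenContFract.of θ
  have hdet := cfDet hθ n
  have hup := cfErrUpper hθ (n+1)
  have hrec := cfDensRec hθ n
  have h0 : (1:ℝ) ≤ g.dens n := cfDensOne θ n
  have h1 : (1:ℝ) ≤ g.dens (n+1) := cfDensOne θ (n+1)
  have h2 : (1:ℝ) ≤ g.dens (n+2) := cfDensOne θ (n+2)
  -- 1 ≤ dens(n+1) * |e n| + dens n * |e (n+1)|
  have tri : (1:ℝ) ≤ g.dens (n+1) * |θ * g.dens n - g.nums n| +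
      g.dens n * |θ * g.dens (n+1) - g.nums (n+1)| := by
    have expand : g.nums n * g.dens (n+1) - g.dens n * g.nums (n+1) =
        -(g.dens (n+1) * (θ * g.dens n - g.nums n)) + g.dens n * (θ * g.dens (n+1) - g.nums (n+1)) := by
      ring
    calc (1:ℝ) = |g.nums n * g.dens (n+1) - g.dens n * g.nums (n+1)| := hdet.symm
      _ ≤ |g.dens (n+1) * (θ * g.dens n - g.nums n)| +
          |g.dens n * (θ * g.dens (n+1) - g.nums (n+1))| := by
            rw [expand]
            exact (abs_add_le _ _).trans (by rw [abs_neg])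
      _ = g.dens (n+1) * |θ * g.dens n - g.nums n| +
          g.dens n * |θ * g.dens (n+1) - g.nums (n+1)| := by
            rw [abs_mul, abs_mul, abs_of_pos (show (0:ℝ) < g.dens (n+1) by linarith), abs_of_pos (show (0:ℝ) < g.dens n by linarith)]
  -- dens n * |e (n+1)| ≤ dens n / dens (n+2) ≤ dens n / (dens n + dens (n+1))
  have step2 : g.dens n * |θ * g.dens (n+1) - g.nums (n+1)| ≤
      g.dens n / (g.dens n + g.dens (n+1)) := by
    have a1 : g.dens n * |θ * g.dens (n+1) - g.nums (n+1)| ≤ g.dens n * (1 / g.dens (n+2)) :=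
      mul_le_mul_of_nonneg_left hup (by linarith)
    have a2 : g.dens n * (1 / g.dens (n+2)) ≤ g.dens n / (g.dens n + g.dens (n+1)) := by
      rw [mul_one_div]
      apply div_le_div_of_nonneg_left (by linarith) (by linarith) hrec
    exact a1.trans a2
  have key : g.dens (n+1) / (g.dens n + g.dens (n+1)) ≤ g.dens (n+1) * |θ * g.dens n - g.nums n| := by
    have : g.dens (n+1) / (g.dens n + g.dens (n+1)) = 1 - g.dens n / (g.dens n + g.dens (n+1)) := by
      field_simp
      ring
    linarith
  have hpos : (0:ℝ) < g.dens (n+1) := by linarith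
  calc 1 / (g.dens n + g.dens (n+1)) = (g.dens (n+1) / (g.dens n + g.dens (n+1))) / g.dens (n+1) := by
        field_simp
    _ ≤ (g.dens (n+1) * |θ * g.dens n - g.nums n|) / g.dens (n+1) := by
        gcongr
    _ = |θ * g.dens n - g.nums n| := by field_simp

section QFacts


variable {q : ℕ → ℕ} (hθ : Irrational θ)
  (hq : ∀ k, (q k : ℝ) = (GenContFract.of θ).dens k)

include hq

lemma qOne (k : ℕ) : 1 ≤ q k := by
  have := cfDensOne θ k; rw [← hq k] at this; exact_mod_cast this

lemma qMono : Monotone q := by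
  apply monotone_nat_of_le_succ
  intro k
  have := GenContFract.of_den_mono (v := θ) (n := k)
  rw [← hq k, ← hq (k+1)] at this; exact_mod_cast this

include hθ in
lemma qRec (k : ℕ) : q k + q (k+1) ≤ q (k+2) := by
  have := cfDensRec hθ k
  rw [← hq k, ← hq (k+1), ← hq (k+2)] at this; exact_mod_cast this

include hθ in
lemma qGrow : ∀ k, k ≤ q k := by
  have key : ∀ k, k ≤ q k ∧ k + 1 ≤ q (k+1) := by
    intro k
    induction k with
    | zero => exact ⟨Nat.zero_le _, qOne hq 1⟩
    | succ k ih =>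
      refine ⟨ih.2, ?_⟩
      have h1 := qRec hθ hq k
      have h2 := qOne hq k
      have he : q (k+1+1) = q (k+2) := rfl
      omega
  exact fun k => (key k).1

include hθ in
lemma qTwo {k : ℕ} (hk : 1 ≤ k) : 2 ≤ q (k+1) := by
  have h1 := qRec hθ hq 0
  have h2 := qOne hq 0
  have h3 := qOne hq 1
  have h4 := qMono hq (show 2 ≤ k + 1 by omega)
  have he : q (0+2) = q 2 := rfl
  have he2 : q (0+1) = q 1 := rfl
  omega

include hθ in
lemma dBounds {k : ℕ} (hk : 1 ≤ k) :
    1 / ((q k : ℝ) + (q (k+1) : ℝ)) ≤ distNearestInt ((q k : ℝ) * θ) ∧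
      distNearestInt ((q k : ℝ) * θ) ≤ 1 / (q (k+1) : ℝ) := by
  obtain ⟨p, hp⟩ := cfNumsInt hθ k
  set x : ℝ := (q k : ℝ) * θ with hx
  have hxe : x = θ * (GenContFract.of θ).dens k := by rw [hx, ← hq k]; ring
  have hub : |x - (p:ℝ)| ≤ 1 / (q (k+1) : ℝ) := by
    rw [hxe, hq (k+1), hp]; exact cfErrUpper hθ k
  have hlb : 1 / ((q k : ℝ) + (q (k+1) : ℝ)) ≤ |x - (p:ℝ)| := by
    rw [hxe, hq k, hq (k+1), hp]; exact cfErrLower hθ k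
  have hq2 : (2:ℝ) ≤ (q (k+1) : ℝ) := by exact_mod_cast qTwo hθ hq hk
  have hq1 : (1:ℝ) ≤ (q k : ℝ) := by exact_mod_cast qOne hq k
  have hsum : (3:ℝ) ≤ (q k : ℝ) + (q (k+1) : ℝ) := by linarith
  constructor
  · by_cases hr : round x = p
    · unfold distNearestInt
      rw [hr]
      exact hlb
    · have hge : (1:ℝ) ≤ |(round x : ℝ) - (p:ℝ)| := by
        have h0 : round x - p ≠ 0 := sub_ne_zero.mpr hr
        have h1 : 1 ≤ |round x - p| := Int.one_le_abs h0
        have h2 : ((|round x - p| : ℤ) : ℝ) = |(round x : ℝ) - (p:ℝ)| := by push_cast; ring_nf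
        calc (1:ℝ) ≤ ((|round x - p| : ℤ) : ℝ) := by exact_mod_cast h1
          _ = _ := h2
      have tri : |(round x : ℝ) - (p:ℝ)| ≤ |x - round x| + |x - p| := by
        have : (round x : ℝ) - p = -(x - round x) + (x - p) := by ring
        rw [this]
        exact (abs_add_le _ _).trans (by rw [abs_neg])
      have h12 : 1 / ((q k : ℝ) + (q (k+1))) ≤ 1/3 := by
        apply div_le_div_of_nonneg_left (by norm_num) (by norm_num) hsum
      have hubb : |x - (p:ℝ)| ≤ 1/2 := hub.trans (by
        apply div_le_div_of_nonneg_left (by norm_num) (by norm_num) hq2)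
      unfold distNearestInt
      linarith
  · unfold distNearestInt
    exact (round_le x p).trans hub

end QFacts

lemma helper1 {x b τ : ℝ} (hτ : 1 ≤ τ) (hx : 0 < x) (hb : x ≤ b) :
    x ^ τ ≤ (max 1 b) ^ (τ - 1) * x := by
  have he : x ^ τ = x ^ (τ - 1) * x := by
    rw [← Real.rpow_add_one hx.ne' (τ - 1)]; ring_nf
  rw [he]
  have h2 : x ^ (τ - 1) ≤ (max 1 b) ^ (τ - 1) :=
    Real.rpow_le_rpow hx.le (hb.trans (le_max_right _ _)) (by linarith)
  exact mul_le_mul_of_nonneg_right h2 hx.le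

lemma helper2 {x a τ : ℝ} (hτ : 1 ≤ τ) (hx : 0 ≤ x) (ha : 1 ≤ a) (h : x ≤ 1 / a) :
    x ^ τ ≤ 1 / a ^ τ := by
  have h1 : x ^ τ ≤ (1 / a) ^ τ := Real.rpow_le_rpow hx h (by linarith)
  rwa [one_div, Real.inv_rpow (by linarith), ← one_div] at h1

lemma helper3 {a b cc τ : ℝ} (hτ : 1 ≤ τ) (hcc : 0 < cc) (ha : 1 ≤ a) (hab : a ≤ b) :
    cc / b ^ τ ≤ cc / a ^ τ := by
  apply div_le_div_of_nonneg_left hcc.le (Real.rpow_pos_of_pos (by linarith) τ)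
  exact Real.rpow_le_rpow (by linarith) hab (by linarith)

theorem tseng_divergence_condition
    (θ : ℝ) (hθ : Irrational θ) (q : ℕ → ℕ)
    (hq : ∀ k, (q k : ℝ) = (GenContFract.of θ).dens k)
    (τ : ℝ) (hτ : 1 ≤ τ) (c : ℝ) (hc : 0 < c)
    (hbad : ∀ n : ℕ, 1 ≤ n → c / (n : ℝ) ^ τ ≤ distNearestInt ((n : ℝ) * θ))
    (ψ : ℕ → ℝ) (hψpos : ∀ n, 0 < ψ n) (hψmono : ∀ m n, m ≤ n → ψ n ≤ ψ m)
    (hdiv : ¬ Summable fun n => ψ n ^ τ) :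
    ¬ Summable fun k =>
      ∑ n ∈ Finset.Ico (q k) (q (k + 1)), min (ψ n) (distNearestInt ((q k : ℝ) * θ)) := by
  classical
  intro hS
  -- basic q facts
  have hq1 : ∀ k, 1 ≤ q k := qOne hq
  have hqm : Monotone q := qMono hq
  have hqg : ∀ k, k ≤ q k := qGrow hθ hq
  have hdlow : ∀ k, 1 ≤ k → 1 / ((q k : ℝ) + (q (k + 1) : ℝ)) ≤ distNearestInt ((q k : ℝ) * θ) :=
    fun k hk => (dBounds hθ hq hk).1
  have hdup : ∀ k, 1 ≤ k → distNearestInt ((q k : ℝ) * θ) ≤ 1 / (q (k + 1) : ℝ) :=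
    fun k hk => (dBounds hθ hq hk).2
  have hdnn : ∀ x : ℝ, 0 ≤ distNearestInt x := fun x => abs_nonneg _
  -- block index K and renormalized term t
  set K : ℕ → ℕ := fun n => Nat.findGreatest (fun k => q k ≤ n) n with hKdef
  set t : ℕ → ℝ := fun n => min (ψ n) (distNearestInt ((q (K n) : ℝ) * θ)) with htdef
  have htnn : ∀ n, 0 ≤ t n := fun n => le_min (hψpos n).le (hdnn _)
  have hKle : ∀ n, q 1 ≤ n → q (K n) ≤ n := by
    intro n hn
    exact Nat.findGreatest_spec (P := fun k => q k ≤ n) (m := 1) (le_trans (hq1 1) hn) hn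
  have hK1 : ∀ n, q 1 ≤ n → 1 ≤ K n := by
    intro n hn
    exact Nat.le_findGreatest (P := fun k => q k ≤ n) (le_trans (hq1 1) hn) hn
  have hKlt : ∀ n, q 1 ≤ n → n < q (K n + 1) := by
    intro n hn
    by_contra hcon
    push_neg at hcon
    exact Nat.findGreatest_is_greatest (P := fun k => q k ≤ n) (Nat.lt_succ_self _) (le_trans (hqg (K n + 1)) hcon) hcon
  have hKblock : ∀ j, 1 ≤ j → ∀ n ∈ Finset.Ico (q j) (q (j + 1)), K n = j := by
    intro j hj n hn
    rw [Finset.mem_Ico] at hn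
    have hn1 : q 1 ≤ n := le_trans (hqm hj) hn.1
    have h1 := hKle n hn1
    have h2 := hKlt n hn1
    rcases lt_trichotomy (K n) j with h | h | h
    · exfalso; have : q (K n + 1) ≤ q j := hqm h; omega
    · exact h
    · exfalso; have : q (j + 1) ≤ q (K n) := hqm h; omega
  -- the series B
  set B : ℕ → ℝ := fun k =>
    ∑ n ∈ Finset.Ico (q k) (q (k + 1)), min (ψ n) (distNearestInt ((q k : ℝ) * θ)) with hBdef
  have hBnn : ∀ k, 0 ≤ B k := by
    intro k
    apply Finset.sum_nonneg
    intro n _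
    exact le_min (hψpos n).le (hdnn _)
  have hBt : ∀ j, 1 ≤ j → B j = ∑ n ∈ Finset.Ico (q j) (q (j + 1)), t n := by
    intro j hj
    apply Finset.sum_congr rfl
    intro n hn
    have hKn : K n = j := hKblock j hj n hn
    show min (ψ n) (distNearestInt ((q j : ℝ) * θ)) = min (ψ n) (distNearestInt ((q (K n) : ℝ) * θ))
    rw [hKn]
  set S' : ℝ := ∑' k, B k with hS'def
  have hIcoEq : ∀ N : ℕ,
      ∑ j ∈ Finset.Ico 1 (N + 1), B j = ∑ n ∈ Finset.Ico (q 1) (q (N + 1)), t n := by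
    intro N
    induction N with
    | zero => simp
    | succ N ih =>
      rw [Finset.sum_Ico_succ_top (by omega), ih, hBt (N + 1) (by omega),
        Finset.sum_Ico_consecutive _ (hqm (by omega : 1 ≤ N + 1)) (hqm (by omega : N + 1 ≤ N + 2))]
  have hF10 : ∀ F : Finset ℕ, (∀ n ∈ F, q 1 ≤ n) → ∑ n ∈ F, t n ≤ S' := by
    intro F hF
    set N : ℕ := F.sup id with hN
    have hsub : F ⊆ Finset.Ico (q 1) (q (N + 1)) := by
      intro n hn
      rw [Finset.mem_Ico]
      refine ⟨hF n hn, ?_⟩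
      have h1 : n ≤ N := Finset.le_sup (f := id) hn
      have h2 := hqg (N + 1)
      omega
    calc ∑ n ∈ F, t n ≤ ∑ n ∈ Finset.Ico (q 1) (q (N + 1)), t n :=
          Finset.sum_le_sum_of_subset_of_nonneg hsub (fun n _ _ => htnn n)
      _ = ∑ j ∈ Finset.Ico 1 (N + 1), B j := (hIcoEq N).symm
      _ ≤ S' := Summable.sum_le_tsum _ (fun i _ => hBnn i) hS
  -- constants
  set K₁ : ℝ := (max 1 (ψ 0)) ^ (τ - 1) with hK₁def
  have hK₁pos : 0 < K₁ := Real.rpow_pos_of_pos (lt_of_lt_of_le one_pos (le_max_left _ _)) _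
  have hpow : ∀ n, ψ n ^ τ ≤ K₁ * ψ n := fun n =>
    helper1 hτ (hψpos n) (hψmono 0 n (Nat.zero_le n))
  have hψτnn : ∀ n, 0 ≤ ψ n ^ τ := fun n => Real.rpow_nonneg (hψpos n).le τ
  -- pointwise bound at points where ψ is small
  have PG : ∀ n, q 1 ≤ n → ψ n ≤ 1 / (2 * (n : ℝ)) → ψ n ^ τ ≤ max K₁ (1 / c) * t n := by
    intro n hn hw
    have hn1 : (1 : ℝ) ≤ (n : ℝ) := by exact_mod_cast le_trans (hq1 1) hn
    have hqn : (1 : ℝ) ≤ ((q (K n) : ℕ) : ℝ) := by exact_mod_cast hq1 (K n)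
    have hqnn : ((q (K n) : ℕ) : ℝ) ≤ (n : ℝ) := by exact_mod_cast hKle n hn
    have hd1 : c / ((q (K n) : ℕ) : ℝ) ^ τ ≤ distNearestInt (((q (K n) : ℕ) : ℝ) * θ) :=
      hbad (q (K n)) (hq1 (K n))
    have hd2 : c / (n : ℝ) ^ τ ≤ distNearestInt (((q (K n) : ℕ) : ℝ) * θ) :=
      le_trans (helper3 hτ hc hqn hqnn) hd1
    have htneq : t n = min (ψ n) (distNearestInt (((q (K n) : ℕ) : ℝ) * θ)) := rfl
    rcases le_or_gt (ψ n) (distNearestInt (((q (K n) : ℕ) : ℝ) * θ)) with hle | hlt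
    · have htn : t n = ψ n := by rw [htneq]; exact min_eq_left hle
      rw [htn]
      calc ψ n ^ τ ≤ K₁ * ψ n := hpow n
        _ ≤ max K₁ (1 / c) * ψ n := mul_le_mul_of_nonneg_right (le_max_left _ _) (hψpos n).le
    · have htn : t n = distNearestInt (((q (K n) : ℕ) : ℝ) * θ) := by
        rw [htneq]; exact min_eq_right hlt.le
      have h1 : ψ n ≤ 1 / (n : ℝ) :=
        le_trans hw (one_div_le_one_div_of_le (by linarith) (by linarith))
      have h2 : ψ n ^ τ ≤ 1 / (n : ℝ) ^ τ := helper2 hτ (hψpos n).le hn1 h1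
      calc ψ n ^ τ ≤ 1 / (n : ℝ) ^ τ := h2
        _ = (1 / c) * (c / (n : ℝ) ^ τ) := by field_simp
        _ ≤ (1 / c) * distNearestInt (((q (K n) : ℕ) : ℝ) * θ) :=
            mul_le_mul_of_nonneg_left hd2 (by positivity)
        _ = (1 / c) * t n := by rw [htn]
        _ ≤ max K₁ (1 / c) * t n := mul_le_mul_of_nonneg_right (le_max_right _ _) (htnn n)
  -- pointwise bound at points where ψ is large
  have PW : ∀ n, q 1 ≤ n → 1 / (2 * (n : ℝ)) < ψ n →
      distNearestInt (((q (K n) : ℕ) : ℝ) * θ) ≤ 2 * t n := by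
    intro n hn hw
    have hKn1 := hK1 n hn
    have hup := hdup (K n) hKn1
    have hn1 : (1 : ℝ) ≤ (n : ℝ) := by exact_mod_cast le_trans (hq1 1) hn
    have hnlt : (n : ℝ) < ((q (K n + 1) : ℕ) : ℝ) := by exact_mod_cast hKlt n hn
    have hd1n : distNearestInt (((q (K n) : ℕ) : ℝ) * θ) ≤ 1 / (n : ℝ) :=
      hup.trans (one_div_le_one_div_of_le (by linarith) hnlt.le)
    have htneq : t n = min (ψ n) (distNearestInt (((q (K n) : ℕ) : ℝ) * θ)) := rfl
    rcases le_or_gt (distNearestInt (((q (K n) : ℕ) : ℝ) * θ)) (ψ n) with hle | hlt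
    · have htn : t n = distNearestInt (((q (K n) : ℕ) : ℝ) * θ) := by
        rw [htneq]; exact min_eq_right hle
      rw [htn]
      have := hdnn (((q (K n) : ℕ) : ℝ) * θ)
      linarith
    · have htn : t n = ψ n := by rw [htneq]; exact min_eq_left hlt.le
      rw [htn]
      have h2n : 1 / (n : ℝ) = 2 * (1 / (2 * (n : ℝ))) := by field_simp
      linarith
  -- pointwise bound at "good" points
  have PGOOD : ∀ n, q 1 ≤ n → 1 / (2 * (n : ℝ)) < ψ n →
      (∃ m, q (K n) < 2 * m ∧ m ≤ q (K n) ∧ ψ m ≤ 1 / (2 * (m : ℝ))) →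
      ψ n ^ τ ≤ (2 / c) * t n := by
    rintro n hn hw ⟨m, hm1, hm2, hm3⟩
    have hψnm : ψ n ≤ ψ m := hψmono m n (le_trans hm2 (hKle n hn))
    have hqn1 : (1 : ℝ) ≤ ((q (K n) : ℕ) : ℝ) := by exact_mod_cast hq1 (K n)
    have hq2m : ((q (K n) : ℕ) : ℝ) ≤ 2 * (m : ℝ) := by exact_mod_cast hm1.le
    have h1 : ψ n ≤ 1 / ((q (K n) : ℕ) : ℝ) := by
      calc ψ n ≤ ψ m := hψnm
        _ ≤ 1 / (2 * (m : ℝ)) := hm3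
        _ ≤ 1 / ((q (K n) : ℕ) : ℝ) := one_div_le_one_div_of_le (by linarith) hq2m
    have h2 : ψ n ^ τ ≤ 1 / ((q (K n) : ℕ) : ℝ) ^ τ := helper2 hτ (hψpos n).le hqn1 h1
    have hd1 : c / ((q (K n) : ℕ) : ℝ) ^ τ ≤ distNearestInt (((q (K n) : ℕ) : ℝ) * θ) :=
      hbad (q (K n)) (hq1 (K n))
    have hPW := PW n hn hw
    calc ψ n ^ τ ≤ 1 / ((q (K n) : ℕ) : ℝ) ^ τ := h2
      _ = (1 / c) * (c / ((q (K n) : ℕ) : ℝ) ^ τ) := by field_simp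
      _ ≤ (1 / c) * (2 * t n) :=
          mul_le_mul_of_nonneg_left (le_trans hd1 hPW) (by positivity)
      _ = (2 / c) * t n := by ring
  -- bad blocks give definite contribution
  have PBAD : ∀ k, 1 ≤ k → 16 ≤ q k → 2 * q 1 ≤ q k →
      (∀ m : ℕ, q k < 2 * m → m ≤ q k → 1 / (2 * (m : ℝ)) < ψ m) →
      (1 : ℝ) / 16 ≤ ∑ n ∈ Finset.Ico (q k / 2 + 1) (q k), t n := by
    intro k hk h16 h2q1 hbadk
    have hqk0 : (16 : ℝ) ≤ (q k : ℝ) := by exact_mod_cast h16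
    have key : ∀ n ∈ Finset.Ico (q k / 2 + 1) (q k), 1 / (4 * (q k : ℝ)) ≤ t n := by
      intro n hn
      rw [Finset.mem_Ico] at hn
      have hn2 : q k < 2 * n := by omega
      have hnq1 : q 1 ≤ n := by omega
      have hW : 1 / (2 * (n : ℝ)) < ψ n := hbadk n hn2 (by omega)
      have hPW := PW n hnq1 hW
      have hKn1 := hK1 n hnq1
      have hKlt' : K n < k := by
        by_contra hcon
        push_neg at hcon
        have h1 : q k ≤ q (K n) := hqm hcon
        have h2 := hKle n hnq1
        omega
      have hsum2 : ((q (K n) : ℕ) : ℝ) + ((q (K n + 1) : ℕ) : ℝ) ≤ 2 * (q k : ℝ) := by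
        have a1 : q (K n) ≤ q k := hqm hKlt'.le
        have a2 : q (K n + 1) ≤ q k := hqm hKlt'
        push_cast
        have : q (K n) + q (K n + 1) ≤ 2 * q k := by omega
        exact_mod_cast this
      have hpos : (0 : ℝ) < ((q (K n) : ℕ) : ℝ) + ((q (K n + 1) : ℕ) : ℝ) := by
        have : (1 : ℝ) ≤ ((q (K n) : ℕ) : ℝ) := by exact_mod_cast hq1 (K n)
        have : (1 : ℝ) ≤ ((q (K n + 1) : ℕ) : ℝ) := by exact_mod_cast hq1 (K n + 1)
        linarith
      have hd1 : 1 / (2 * (q k : ℝ)) ≤ distNearestInt (((q (K n) : ℕ) : ℝ) * θ) :=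
        le_trans (one_div_le_one_div_of_le hpos hsum2) (hdlow (K n) hKn1)
      have heq : 1 / (4 * (q k : ℝ)) = (1 / (2 * (q k : ℝ))) / 2 := by
        field_simp
        ring
      rw [heq]
      linarith
    have hsum := Finset.card_nsmul_le_sum _ _ _ key
    rw [nsmul_eq_mul] at hsum
    have hcard4 : q k ≤ 4 * (Finset.Ico (q k / 2 + 1) (q k)).card := by
      rw [Nat.card_Ico]
      omega
    have hcardR : (q k : ℝ) ≤ 4 * (((Finset.Ico (q k / 2 + 1) (q k)).card : ℕ) : ℝ) := by
      exact_mod_cast hcard4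
    have hlast : (1 : ℝ) / 16 ≤
        (((Finset.Ico (q k / 2 + 1) (q k)).card : ℕ) : ℝ) * (1 / (4 * (q k : ℝ))) := by
      rw [mul_one_div, le_div_iff₀ (by linarith)]
      nlinarith
    linarith
  -- there are only finitely many bad blocks
  have claim : ∃ K₀, 1 ≤ K₀ ∧ ∀ k, K₀ ≤ k →
      ∃ m, q k < 2 * m ∧ m ≤ q k ∧ ψ m ≤ 1 / (2 * (m : ℝ)) := by
    by_contra hcon
    push_neg at hcon
    have aux : ∀ N : ℕ, ∃ F : Finset ℕ, (∀ n ∈ F, q 1 ≤ n) ∧ (N : ℝ) / 16 ≤ ∑ n ∈ F, t n := by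
      intro N
      induction N with
      | zero => exact ⟨∅, by simp, by simp⟩
      | succ N ih =>
        obtain ⟨F, hF1, hF2⟩ := ih
        set Mx : ℕ := F.sup id with hMx
        obtain ⟨k, hk1, hk2⟩ := hcon (max (max 16 (2 * q 1)) (2 * Mx + 2)) (by omega)
        have hqk : max (max 16 (2 * q 1)) (2 * Mx + 2) ≤ q k := le_trans hk1 (hqg k)
        have hk_low : 1 ≤ k := by omega
        have hR := PBAD k hk_low (by omega) (by omega) hk2
        have hdisj : Disjoint F (Finset.Ico (q k / 2 + 1) (q k)) := by
          rw [Finset.disjoint_left]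
          intro n hnF hnR
          have h1 : n ≤ Mx := Finset.le_sup (f := id) hnF
          rw [Finset.mem_Ico] at hnR
          omega
        refine ⟨F ∪ Finset.Ico (q k / 2 + 1) (q k), ?_, ?_⟩
        · intro n hn
          rcases Finset.mem_union.mp hn with h | h
          · exact hF1 n h
          · rw [Finset.mem_Ico] at h
            omega
        · rw [Finset.sum_union hdisj]
          push_cast
          linarith
    obtain ⟨F, hF1, hF2⟩ := aux (⌈S'⌉₊ * 16 + 16)
    have hle := hF10 F hF1
    have hceil := Nat.le_ceil S'
    have hfin : S' < ((⌈S'⌉₊ * 16 + 16 : ℕ) : ℝ) / 16 := by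
      push_cast
      linarith
    linarith
  obtain ⟨K₀, hK₀1, hK₀⟩ := claim
  set C : ℝ := max (max K₁ (1 / c)) (2 / c) with hCdef
  have hC0 : (0 : ℝ) ≤ C := le_trans (by positivity : (0 : ℝ) ≤ 2 / c) (le_max_right _ _)
  have hptn : ∀ n, q K₀ ≤ n → ψ n ^ τ ≤ C * t n := by
    intro n hn
    have hnq1 : q 1 ≤ n := le_trans (hqm hK₀1) hn
    have hKn : K₀ ≤ K n := by
      by_contra hcon
      push_neg at hcon
      have h2 : q (K n + 1) ≤ q K₀ := hqm hcon
      have h3 := hKlt n hnq1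
      omega
    rcases le_or_gt (ψ n) (1 / (2 * (n : ℝ))) with hw | hw
    · exact le_trans (PG n hnq1 hw)
        (mul_le_mul_of_nonneg_right (le_max_left _ _) (htnn n))
    · obtain ⟨m, hm⟩ := hK₀ (K n) hKn
      exact le_trans (PGOOD n hnq1 hw ⟨m, hm⟩)
        (mul_le_mul_of_nonneg_right (le_max_right _ _) (htnn n))
  have hS'0 : 0 ≤ S' := tsum_nonneg hBnn
  have hsummable : Summable (fun n => ψ n ^ τ) := by
    apply summable_of_sum_range_le (c := (∑ n ∈ Finset.range (q K₀), ψ n ^ τ) + C * S')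
    · exact fun n => hψτnn n
    · intro N
      rcases le_or_gt N (q K₀) with hN | hN
      · have hsub : Finset.range N ⊆ Finset.range (q K₀) := Finset.range_subset_range.mpr hN
        have h1 : ∑ n ∈ Finset.range N, ψ n ^ τ ≤ ∑ n ∈ Finset.range (q K₀), ψ n ^ τ :=
          Finset.sum_le_sum_of_subset_of_nonneg hsub (fun n _ _ => hψτnn n)
        have h2 : 0 ≤ C * S' := mul_nonneg hC0 hS'0
        linarith
      · have hsplit : ∑ n ∈ Finset.range N, ψ n ^ τ =
            (∑ n ∈ Finset.range (q K₀), ψ n ^ τ) + ∑ n ∈ Finset.Ico (q K₀) N, ψ n ^ τ := by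
          rw [Finset.range_eq_Ico, Finset.range_eq_Ico]
          exact (Finset.sum_Ico_consecutive (fun n => ψ n ^ τ) (Nat.zero_le (q K₀)) hN.le).symm
        have h2 : ∑ n ∈ Finset.Ico (q K₀) N, ψ n ^ τ ≤ C * ∑ n ∈ Finset.Ico (q K₀) N, t n := by
          rw [Finset.mul_sum]
          exact Finset.sum_le_sum (fun n hn => hptn n (Finset.mem_Ico.mp hn).1)
        have h3 : ∑ n ∈ Finset.Ico (q K₀) N, t n ≤ S' := by
          apply hF10
          intro n hn
          exact le_trans (hqm hK₀1) (Finset.mem_Ico.mp hn).1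
        have h4 : C * ∑ n ∈ Finset.Ico (q K₀) N, t n ≤ C * S' := mul_le_mul_of_nonneg_left h3 hC0
        rw [hsplit]
        linarith
  exact hdiv hsummable
end

section
/- Let τ ≥ 1 and suppose θ is irrational but not in Ω^(τ), i.e. for every c > 0 there exists n with ‖nθ‖ < c/n^τ. Then there exists a positive non-increasing sequence ψ with ∑_{n≥1} ψ(n)^τ = ∞ such that for almost all s ∈ ℝ the inequality ‖nθ − s‖ < ψ(n) has only finitely many solutions n. -/
open MeasureTheory Filter
open scoped ENNReal Classical

namespace TsengAux

noncomputable def cfun (τ : ℝ) (M : ℕ) (k : ℕ) : ℝ :=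
  1 / (8 * ((k : ℝ) + 1) ^ 2 * (2 * (M : ℝ) + 2) * (1 + ((k : ℝ) + 1) ^ (2 * τ)))

noncomputable def dfun (τ : ℝ) (q : ℕ) (k : ℕ) (δ : ℝ) : ℝ :=
  min δ (((q : ℝ) * ((k : ℝ) + 1) ^ 2) ^ (-τ))

noncomputable def st (τ : ℝ) (Q : ℝ → ℕ) : ℕ → ℕ × ℕ × ℝ
  | 0 => (1, 0, 1)
  | k + 1 =>
    (Q (cfun τ (st τ Q k).2.1 k),
      (st τ Q k).2.1 +
        ⌈1 / dfun τ (Q (cfun τ (st τ Q k).2.1 k)) k (st τ Q k).2.2⌉₊,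
      dfun τ (Q (cfun τ (st τ Q k).2.1 k)) k (st τ Q k).2.2)

noncomputable def qq (τ : ℝ) (Q : ℝ → ℕ) (k : ℕ) : ℕ := (st τ Q k).1
noncomputable def MM (τ : ℝ) (Q : ℝ → ℕ) (k : ℕ) : ℕ := (st τ Q k).2.1
noncomputable def dd (τ : ℝ) (Q : ℝ → ℕ) (k : ℕ) : ℝ := (st τ Q k).2.2
noncomputable def cc (τ : ℝ) (Q : ℝ → ℕ) (k : ℕ) : ℝ := cfun τ (MM τ Q k) k

variable {τ : ℝ} {Q : ℝ → ℕ} {θ : ℝ}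

lemma MM_zero (τ Q) : MM τ Q 0 = 0 := rfl
lemma dd_zero (τ Q) : dd τ Q 0 = 1 := rfl
lemma qq_succ (τ Q) (k : ℕ) : qq τ Q (k + 1) = Q (cc τ Q k) := rfl
lemma dd_succ (τ Q) (k : ℕ) : dd τ Q (k + 1) = dfun τ (qq τ Q (k + 1)) k (dd τ Q k) := rfl
lemma MM_succ (τ Q) (k : ℕ) : MM τ Q (k + 1) = MM τ Q k + ⌈1 / dd τ Q (k + 1)⌉₊ := rfl

lemma cc_pos (τ Q) (k : ℕ) : 0 < cc τ Q k := by
  have h1 : (0:ℝ) < ((k : ℝ) + 1) ^ (2 * τ) := Real.rpow_pos_of_pos (by positivity) _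
  unfold cc cfun
  positivity

section WithHQ
variable (hτ : 1 ≤ τ)
    (hQ : ∀ c : ℝ, 0 < c →
      1 ≤ Q c ∧ distNearestInt ((Q c : ℝ) * θ) < c / (Q c : ℝ) ^ τ)

include hτ hQ

lemma qq_one_le (k : ℕ) : 1 ≤ qq τ Q (k + 1) := (hQ _ (cc_pos τ Q k)).1

lemma hq_approx (k : ℕ) :
    distNearestInt ((qq τ Q (k + 1) : ℝ) * θ) < cc τ Q k / (qq τ Q (k + 1) : ℝ) ^ τ :=
  (hQ _ (cc_pos τ Q k)).2

lemma dd_pos : ∀ k, 0 < dd τ Q k := by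
  intro k
  induction k with
  | zero => exact one_pos
  | succ k ih =>
    rw [dd_succ]
    have hq : (1:ℝ) ≤ (qq τ Q (k+1) : ℝ) := by exact_mod_cast qq_one_le hτ hQ k
    have : (0:ℝ) < (qq τ Q (k+1) : ℝ) * ((k:ℝ)+1)^2 := by positivity
    exact lt_min ih (Real.rpow_pos_of_pos this _)

omit hτ hQ in
lemma dd_anti : ∀ {j k : ℕ}, j ≤ k → dd τ Q k ≤ dd τ Q j := by
  intro j k h
  induction k with
  | zero => simp_all
  | succ k ih =>
    rcases Nat.eq_or_lt_of_le h with rfl | h'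
    · rfl
    · exact le_trans (min_le_left _ _) (ih (Nat.lt_succ_iff.mp h'))

omit hτ hQ in
lemma dd_le_one (k : ℕ) : dd τ Q k ≤ 1 := (dd_anti (Nat.zero_le k)).trans_eq (dd_zero τ Q)

lemma MM_lt (k : ℕ) : MM τ Q k < MM τ Q (k + 1) := by
  rw [MM_succ]
  have h : 0 < 1 / dd τ Q (k+1) := by
    have := dd_pos hτ hQ (k+1); positivity
  have := Nat.one_le_ceil_iff.mpr h
  omega

lemma MM_mono : ∀ {j k : ℕ}, j ≤ k → MM τ Q j ≤ MM τ Q k := by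
  intro j k h
  induction k with
  | zero => simp_all
  | succ k ih =>
    rcases Nat.eq_or_lt_of_le h with rfl | h'
    · rfl
    · exact le_trans (ih (Nat.lt_succ_iff.mp h')) (MM_lt hτ hQ k).le

lemma le_MM : ∀ k, k ≤ MM τ Q k := by
  intro k
  induction k with
  | zero => exact Nat.zero_le _
  | succ k ih => exact Nat.succ_le_of_lt (lt_of_le_of_lt ih (MM_lt hτ hQ k))

omit hτ hQ in
lemma inv_dd_le : ∀ k, 1 / dd τ Q k ≤ (MM τ Q k : ℝ) + 1 := by
  intro k
  induction k with
  | zero => norm_num [dd_zero, MM_zero]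
  | succ k _ =>
    refine le_trans (Nat.le_ceil _) ?_
    have : (⌈1 / dd τ Q (k+1)⌉₊ : ℝ) ≤ (MM τ Q (k+1) : ℝ) := by
      exact_mod_cast Nat.le_add_left _ _
    linarith

/-- `q_{k+1} · δ_{k+1}^{1/τ} ≤ 1/(k+1)^2`. -/
lemma qd_le (k : ℕ) :
    (qq τ Q (k + 1) : ℝ) * dd τ Q (k + 1) ^ (1 / τ) ≤ 1 / ((k : ℝ) + 1) ^ 2 := by
  have hτ0 : (0:ℝ) < τ := lt_of_lt_of_le one_pos hτ
  have hq1 : (1:ℝ) ≤ (qq τ Q (k+1) : ℝ) := by exact_mod_cast qq_one_le hτ hQ k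
  set x : ℝ := (qq τ Q (k+1) : ℝ) * ((k:ℝ)+1)^2 with hx
  have hxpos : 0 < x := by positivity
  have h1 : dd τ Q (k+1) ≤ x ^ (-τ) := min_le_right _ _
  have h2 : dd τ Q (k+1) ^ (1/τ) ≤ (x ^ (-τ)) ^ (1/τ) :=
    Real.rpow_le_rpow (dd_pos hτ hQ _).le h1 (by positivity)
  have h3 : (x ^ (-τ)) ^ (1/τ) = x⁻¹ := by
    rw [← Real.rpow_mul hxpos.le]
    have : -τ * (1/τ) = -1 := by field_simp
    rw [this, Real.rpow_neg_one]
  rw [h3] at h2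
  calc (qq τ Q (k + 1) : ℝ) * dd τ Q (k + 1) ^ (1 / τ)
      ≤ (qq τ Q (k + 1) : ℝ) * x⁻¹ := by
        exact mul_le_mul_of_nonneg_left h2 (by positivity)
    _ = 1 / ((k : ℝ) + 1) ^ 2 := by
        rw [hx]
        field_simp


/-- `M_{k+1} · ‖q_{k+1} θ‖ ≤ 1/(k+1)^2`. -/
lemma Md_le (k : ℕ) :
    (MM τ Q (k + 1) : ℝ) * distNearestInt ((qq τ Q (k + 1) : ℝ) * θ) ≤ 1 / ((k : ℝ) + 1) ^ 2 := by
  have hτ0 : (0:ℝ) < τ := lt_of_lt_of_le one_pos hτ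
  set K : ℝ := (k : ℝ) + 1 with hK
  have hK1 : (1:ℝ) ≤ K := by rw [hK]; have := Nat.cast_nonneg (α:=ℝ) k; linarith
  have hq1 : (1:ℝ) ≤ (qq τ Q (k+1) : ℝ) := by exact_mod_cast qq_one_le hτ hQ k
  set q : ℝ := (qq τ Q (k+1) : ℝ) with hqdef
  have hqτ : (1:ℝ) ≤ q ^ τ := by
    calc (1:ℝ) = 1 ^ τ := (Real.one_rpow τ).symm
    _ ≤ q ^ τ := Real.rpow_le_rpow (by norm_num) hq1 hτ0.le
  set A : ℝ := 2 * (MM τ Q k : ℝ) + 2 with hA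
  set B : ℝ := 1 + K ^ (2 * τ) with hB
  have hA2 : (2:ℝ) ≤ A := by have : (0:ℝ) ≤ (MM τ Q k : ℝ) := Nat.cast_nonneg _; linarith
  have hKt : (0:ℝ) < K ^ (2*τ) := Real.rpow_pos_of_pos (by linarith) _
  have hB1 : (1:ℝ) ≤ B := by simp [hB]; positivity
  have hc : cc τ Q k = 1 / (8 * K ^ 2 * A * B) := rfl
  have hcpos : 0 < cc τ Q k := cc_pos τ Q k
  set d : ℝ := distNearestInt (q * θ) with hd
  have hd0 : 0 ≤ d := abs_nonneg _
  have hdlt : d < cc τ Q k / q ^ τ := hq_approx hτ hQ k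
  -- bound on M_{k+1}
  have hxτ : (q * K ^ 2) ^ τ = q ^ τ * K ^ (2 * τ) := by
    rw [Real.mul_rpow (by linarith) (by positivity), ← Real.rpow_natCast K 2,
      ← Real.rpow_mul (by linarith)]
    norm_num
  have hM1 : (MM τ Q (k+1) : ℝ) ≤ A + q ^ τ * K ^ (2 * τ) := by
    have hMsucc : (MM τ Q (k+1) : ℝ) = (MM τ Q k : ℝ) + (⌈1 / dd τ Q (k+1)⌉₊ : ℝ) := by
      rw [MM_succ]; push_cast; ring
    have hceil : (⌈1 / dd τ Q (k+1)⌉₊ : ℝ) < 1 / dd τ Q (k+1) + 1 :=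
      Nat.ceil_lt_add_one (by have := dd_pos hτ hQ (k+1); positivity)
    have hinv : 1 / dd τ Q (k+1) ≤ ((MM τ Q k : ℝ) + 1) + (q * K ^ 2) ^ τ := by
      have hxpos : (0:ℝ) < q * K ^ 2 := by positivity
      have hxt : (0:ℝ) < (q * K ^ 2) ^ τ := Real.rpow_pos_of_pos hxpos _
      have hMk1 : (0:ℝ) ≤ (MM τ Q k : ℝ) + 1 := by positivity
      rcases min_cases (dd τ Q k) ((q * K ^ 2) ^ (-τ)) with ⟨hmin, _⟩ | ⟨hmin, _⟩
      · have : 1 / dd τ Q (k+1) = 1 / dd τ Q k := by rw [dd_succ]; unfold dfun; rw [← hqdef, ← hK, hmin]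
        rw [this]
        have := inv_dd_le (τ := τ) (Q := Q) k
        linarith
      · have : 1 / dd τ Q (k+1) = (q * K ^ 2) ^ τ := by
          rw [dd_succ]; unfold dfun; rw [← hqdef, ← hK, hmin, Real.rpow_neg hxpos.le,
            one_div, inv_inv]
        rw [this]
        linarith
    rw [hMsucc]
    rw [hxτ] at hinv
    have : (0:ℝ) ≤ (MM τ Q k : ℝ) := Nat.cast_nonneg _
    simp only [hA]
    linarith
  -- combine
  have hM10 : (0:ℝ) ≤ (MM τ Q (k+1) : ℝ) := Nat.cast_nonneg _
  have step1 : (MM τ Q (k+1) : ℝ) * d ≤ (A + q ^ τ * K ^ (2*τ)) * (cc τ Q k / q ^ τ) := by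
    apply mul_le_mul hM1 hdlt.le hd0 (by positivity)
  have step2 : (A + q ^ τ * K ^ (2*τ)) * (cc τ Q k / q ^ τ)
      ≤ A * cc τ Q k + cc τ Q k * K ^ (2*τ) := by
    have hqτ0 : (0:ℝ) < q ^ τ := by linarith
    rw [add_mul]
    have e1 : A * (cc τ Q k / q ^ τ) ≤ A * cc τ Q k := by
      apply mul_le_mul_of_nonneg_left _ (by linarith)
      exact div_le_self hcpos.le hqτ
    have e2 : q ^ τ * K ^ (2*τ) * (cc τ Q k / q ^ τ) = cc τ Q k * K ^ (2*τ) := by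
      field_simp
    linarith
  have step3 : A * cc τ Q k + cc τ Q k * K ^ (2*τ) ≤ 1 / K ^ 2 := by
    rw [hc]
    have hden : (0:ℝ) < 8 * K ^ 2 * A * B := by positivity
    have hK20 : (0:ℝ) < K ^ 2 := by positivity
    have h1 : A + K ^ (2*τ) ≤ A * B := by nlinarith [hA2, hB1, hKt]
    have h2 : (A + K ^ (2*τ)) * K ^ 2 ≤ A * B * K ^ 2 :=
      mul_le_mul_of_nonneg_right h1 (by positivity)
    have e : A * (1 / (8 * K ^ 2 * A * B)) + 1 / (8 * K ^ 2 * A * B) * K ^ (2*τ)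
        = (A + K ^ (2*τ)) / (8 * K ^ 2 * A * B) := by field_simp
    rw [e, div_le_div_iff₀ hden hK20]
    nlinarith [mul_pos (mul_pos (by linarith : (0:ℝ) < A) (by linarith : (0:ℝ) < B)) hK20]
  linarith

/-- The set of 'bad' `s` in `[m, m+1)` coming from block `k+1`. -/
def SBad (τ : ℝ) (Q : ℝ → ℕ) (θ : ℝ) (m : ℤ) (k : ℕ) : Set ℝ :=
  {s | s ∈ Set.Ico (m : ℝ) ((m : ℝ) + 1) ∧ ∃ n : ℕ,
    n ∈ Set.Ioc (MM τ Q k) (MM τ Q (k + 1)) ∧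
    distNearestInt ((n : ℝ) * θ - s) < dd τ Q (k + 1) ^ (1 / τ)}

lemma cover (m : ℤ) (k : ℕ) :
    volume (SBad τ Q θ m k) ≤ ENNReal.ofReal (20 / ((k : ℝ) + 1) ^ 2) := by
  have hτ0 : (0:ℝ) < τ := lt_of_lt_of_le one_pos hτ
  have hq1 : 1 ≤ qq τ Q (k + 1) := qq_one_le hτ hQ k
  set q : ℕ := qq τ Q (k + 1) with hqdef
  have hqR1 : (1:ℝ) ≤ (q : ℝ) := by exact_mod_cast hq1
  have hqR0 : (0:ℝ) < (q : ℝ) := by linarith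
  set δ : ℝ := dd τ Q (k + 1) with hδdef
  have hδ0 : 0 < δ := dd_pos hτ hQ (k + 1)
  set p : ℤ := round ((q : ℝ) * θ) with hpdef
  set d : ℝ := distNearestInt ((q : ℝ) * θ) with hddef
  have hdeq : d = |(q : ℝ) * θ - (p : ℝ)| := rfl
  have hd0 : 0 ≤ d := abs_nonneg _
  set ρ : ℝ := δ ^ (1/τ) + (MM τ Q (k + 1) : ℝ) * d / (q : ℝ) with hρdef
  have hδτ0 : 0 < δ ^ (1/τ) := Real.rpow_pos_of_pos hδ0 _
  have hMd : (MM τ Q (k + 1) : ℝ) * d ≤ 1 / ((k : ℝ) + 1) ^ 2 := Md_le hτ hQ k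
  have hqd : (q : ℝ) * δ ^ (1/τ) ≤ 1 / ((k : ℝ) + 1) ^ 2 := qd_le hτ hQ k
  have hK20 : (0:ℝ) < ((k : ℝ) + 1) ^ 2 := by positivity
  have hK21 : (1:ℝ) ≤ ((k : ℝ) + 1) ^ 2 := by
    have : (0:ℝ) ≤ (k:ℝ) := Nat.cast_nonneg _
    nlinarith
  have hρ0 : 0 < ρ := by
    have : 0 ≤ (MM τ Q (k + 1) : ℝ) * d / (q : ℝ) := by positivity
    simp only [hρdef]; linarith
  have hρ2 : ρ ≤ 2 := by
    have h1 : δ ^ (1/τ) ≤ 1 :=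
      Real.rpow_le_one hδ0.le (dd_le_one (τ:=τ) (Q:=Q) (k+1)) (by positivity)
    have h2 : (MM τ Q (k + 1) : ℝ) * d / (q : ℝ) ≤ 1 := by
      rw [div_le_one hqR0]
      calc (MM τ Q (k + 1) : ℝ) * d ≤ 1 / ((k : ℝ) + 1) ^ 2 := hMd
        _ ≤ 1 := by rw [div_le_one hK20]; exact hK21
        _ ≤ (q : ℝ) := hqR1
    simp only [hρdef]; linarith
  clear_value q δ p d ρ
  -- inclusion into a finite union of balls
  have hsub : SBad τ Q θ m k ⊆
      ⋃ j ∈ Finset.Ioo ((m - 2) * (q : ℤ)) ((m + 3) * (q : ℤ)),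
        Metric.ball ((j : ℝ) / (q : ℝ)) ρ := by
    rintro s ⟨⟨hm1, hm2⟩, n, ⟨hn1, hn2⟩, hdist⟩
    set r : ℤ := round ((n : ℝ) * θ - s) with hrdef
    have h1 : |(n : ℝ) * θ - s - (r : ℝ)| < δ ^ (1/τ) := by
      rw [hrdef, hδdef]; exact hdist
    set j : ℤ := (n : ℤ) * p - r * (q : ℤ) with hjdef
    have hno : (n : ℝ) ≤ (MM τ Q (k + 1) : ℝ) := by exact_mod_cast hn2
    have hn0 : (0:ℝ) ≤ (n : ℝ) := Nat.cast_nonneg _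
    have key : |s - (j : ℝ) / (q : ℝ)| < ρ := by
      have e1 : s - (j : ℝ) / (q : ℝ)
          = -((n : ℝ) * θ - s - (r : ℝ)) + ((n : ℝ) / (q : ℝ)) * ((q : ℝ) * θ - (p : ℝ)) := by
        have hjc : ((j:ℤ):ℝ) = (n:ℝ)*(p:ℝ) - (r:ℝ)*(q:ℝ) := by rw [hjdef]; push_cast; ring
        rw [hjc]
        field_simp
        ring
      have e2 : |((n : ℝ) / (q : ℝ)) * ((q : ℝ) * θ - (p : ℝ))|
          ≤ (MM τ Q (k + 1) : ℝ) * d / (q : ℝ) := by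
        rw [abs_mul, ← hdeq, abs_div, abs_of_nonneg hn0, abs_of_pos hqR0, div_mul_eq_mul_div]
        gcongr
      calc |s - (j : ℝ) / (q : ℝ)|
          ≤ |(n : ℝ) * θ - s - (r : ℝ)| + |((n : ℝ) / (q : ℝ)) * ((q : ℝ) * θ - (p : ℝ))| := by
            rw [e1]; exact (abs_add_le _ _).trans (by rw [abs_neg])
        _ < ρ := by simp only [hρdef]; linarith
    refine Set.mem_iUnion₂.mpr ⟨j, ?_, ?_⟩
    · obtain ⟨hlb, hub⟩ := abs_lt.mp key
      have hjge : ((m : ℝ) - 2) * (q : ℝ) < (j : ℝ) := by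
        have h5 : (m : ℝ) - 2 < (j : ℝ) / (q : ℝ) := by linarith
        calc ((m : ℝ) - 2) * (q : ℝ) < ((j : ℝ) / (q : ℝ)) * (q : ℝ) :=
              mul_lt_mul_of_pos_right h5 hqR0
          _ = (j : ℝ) := by field_simp
      have hjle : (j : ℝ) < ((m : ℝ) + 3) * (q : ℝ) := by
        have h5 : (j : ℝ) / (q : ℝ) < (m : ℝ) + 3 := by linarith
        calc (j : ℝ) = ((j : ℝ) / (q : ℝ)) * (q : ℝ) := by field_simp
          _ < ((m : ℝ) + 3) * (q : ℝ) := mul_lt_mul_of_pos_right h5 hqR0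
      rw [Finset.mem_Ioo]
      exact ⟨by exact_mod_cast hjge, by exact_mod_cast hjle⟩
    · rw [Metric.mem_ball, Real.dist_eq]
      exact key
  -- measure computation
  have hcard : (Finset.Ioo ((m - 2) * (q : ℤ)) ((m + 3) * (q : ℤ))).card ≤ 5 * q := by
    rw [Int.card_Ioo, show (m + 3) * (q:ℤ) - (m - 2) * (q:ℤ) - 1 = 5*(q:ℤ) - 1 from by ring]
    omega
  calc volume (SBad τ Q θ m k)
      ≤ volume (⋃ j ∈ Finset.Ioo ((m - 2) * (q : ℤ)) ((m + 3) * (q : ℤ)),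
        Metric.ball ((j : ℝ) / (q : ℝ)) ρ) := measure_mono hsub
    _ ≤ ∑ j ∈ Finset.Ioo ((m - 2) * (q : ℤ)) ((m + 3) * (q : ℤ)),
        volume (Metric.ball ((j : ℝ) / (q : ℝ)) ρ) := measure_biUnion_finset_le _ _
    _ = (Finset.Ioo ((m - 2) * (q : ℤ)) ((m + 3) * (q : ℤ))).card • ENNReal.ofReal (2 * ρ) := by
        simp [Real.volume_ball]
    _ ≤ (5 * q) • ENNReal.ofReal (2 * ρ) := by
        exact smul_le_smul_of_nonneg_right (by exact_mod_cast hcard) (by positivity)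
    _ = ENNReal.ofReal ((5 * q : ℕ) * (2 * ρ)) := by
        rw [nsmul_eq_mul, ← ENNReal.ofReal_natCast (5 * q), ← ENNReal.ofReal_mul (by positivity)]
    _ ≤ ENNReal.ofReal (20 / ((k : ℝ) + 1) ^ 2) := by
        apply ENNReal.ofReal_le_ofReal
        push_cast
        have expand : (5 * (q:ℝ)) * (2 * ρ)
            = 10 * ((q:ℝ) * δ ^ (1/τ)) + 10 * ((MM τ Q (k + 1) : ℝ) * d) := by
          simp only [hρdef]
          field_simp
          ring
        rw [expand, show (20:ℝ) / ((k : ℝ) + 1) ^ 2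
          = 10 * (1 / ((k : ℝ) + 1) ^ 2) + 10 * (1 / ((k : ℝ) + 1) ^ 2) from by ring]
        have h1 := hqd
        have h2 := hMd
        linarith

end WithHQ
end TsengAux

open TsengAux in
theorem tseng_theorem_necessity
    (θ : ℝ) (hθ : Irrational θ) (τ : ℝ) (hτ : 1 ≤ τ)
    (hnot : ∀ c : ℝ, 0 < c → ∃ n : ℕ, 1 ≤ n ∧ distNearestInt ((n : ℝ) * θ) < c / (n : ℝ) ^ τ) :
    ∃ ψ : ℕ → ℝ, (∀ n, 0 < ψ n) ∧ (∀ m n, m ≤ n → ψ n ≤ ψ m) ∧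
      (¬ Summable fun n => ψ n ^ τ) ∧
      ∀ᵐ s ∂(volume : Measure ℝ),
        {n : ℕ | distNearestInt ((n : ℝ) * θ - s) < ψ n}.Finite := by
  classical
  have hτ0 : (0:ℝ) < τ := lt_of_lt_of_le one_pos hτ
  set Q : ℝ → ℕ := fun c => if h : 0 < c then (hnot c h).choose else 1 with hQdef
  have hQ : ∀ c : ℝ, 0 < c → 1 ≤ Q c ∧ distNearestInt ((Q c : ℝ) * θ) < c / (Q c : ℝ) ^ τ := by
    intro c hc
    simp only [hQdef, dif_pos hc]
    exact (hnot c hc).choose_spec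
  clear_value Q
  have hMω : ∀ n : ℕ, ∃ k : ℕ, n ≤ MM τ Q (k + 1) := fun n =>
    ⟨n, le_trans (Nat.le_succ n) (le_MM hτ hQ (n + 1))⟩
  set Kf : ℕ → ℕ := fun n => Nat.find (hMω n) with hKdef
  set ψ : ℕ → ℝ := fun n => dd τ Q (Kf n + 1) ^ (1 / τ) with hψdef
  have hψpos : ∀ n, 0 < ψ n := fun n => Real.rpow_pos_of_pos (dd_pos hτ hQ _) _
  have hKmono : ∀ {a b : ℕ}, a ≤ b → Kf a ≤ Kf b := by
    intro a b hab
    exact Nat.find_mono (fun k hk => le_trans hab hk)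
  have hψmono : ∀ a b : ℕ, a ≤ b → ψ b ≤ ψ a := by
    intro a b hab
    exact Real.rpow_le_rpow (dd_pos hτ hQ _).le
      (dd_anti (Nat.succ_le_succ (hKmono hab))) (by positivity)
  have hKf_eq : ∀ k n, MM τ Q k < n → n ≤ MM τ Q (k + 1) → Kf n = k := by
    intro k n h1 h2
    have ha : Kf n ≤ k := by
      apply Nat.find_le
      exact h2
    apply le_antisymm ha
    by_contra h
    push_neg at h
    have h3 := Nat.find_spec (hMω n)
    have h4 : MM τ Q (Kf n + 1) ≤ MM τ Q k := MM_mono hτ hQ (by omega)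
    exact absurd (le_trans h3 h4) (not_le.mpr h1)
  refine ⟨ψ, hψpos, hψmono, ?_, ?_⟩
  · -- non-summability
    intro hsum
    have hterm : ∀ k, ∀ n ∈ Finset.Ioc (MM τ Q k) (MM τ Q (k + 1)),
        ψ n ^ τ = dd τ Q (k + 1) := by
      intro k n hn
      rw [Finset.mem_Ioc] at hn
      rw [hψdef]
      simp only
      rw [hKf_eq k n hn.1 hn.2, ← Real.rpow_mul (dd_pos hτ hQ (k + 1)).le, one_div,
        inv_mul_cancel₀ (ne_of_gt hτ0), Real.rpow_one]
    have hblock : ∀ k, (1:ℝ) ≤ ∑ n ∈ Finset.Ioc (MM τ Q k) (MM τ Q (k + 1)), ψ n ^ τ := by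
      intro k
      rw [Finset.sum_congr rfl (hterm k), Finset.sum_const, Nat.card_Ioc, nsmul_eq_mul]
      have hL : MM τ Q (k + 1) - MM τ Q k = ⌈1 / dd τ Q (k + 1)⌉₊ := by
        rw [MM_succ]; omega
      rw [hL]
      have hδ := dd_pos hτ hQ (k + 1)
      have h1 : 1 / dd τ Q (k + 1) ≤ (⌈1 / dd τ Q (k + 1)⌉₊ : ℝ) := Nat.le_ceil _
      calc (1:ℝ) = (1 / dd τ Q (k + 1)) * dd τ Q (k + 1) := by field_simp
        _ ≤ _ := mul_le_mul_of_nonneg_right h1 hδ.le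
    have hpartial : ∀ K : ℕ, (K : ℝ) ≤ ∑ n ∈ Finset.Ioc 0 (MM τ Q K), ψ n ^ τ := by
      intro K
      induction K with
      | zero => simp [MM_zero]
      | succ K ih =>
        have hdisj : Disjoint (Finset.Ioc 0 (MM τ Q K))
            (Finset.Ioc (MM τ Q K) (MM τ Q (K + 1))) := by
          rw [Finset.disjoint_left]
          intro a ha hb
          rw [Finset.mem_Ioc] at ha hb
          omega
        rw [← Finset.Ioc_union_Ioc_eq_Ioc (Nat.zero_le (MM τ Q K)) (MM_mono hτ hQ (Nat.le_succ K)),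
          Finset.sum_union hdisj]
        push_cast
        linarith [hblock K, ih]
    obtain ⟨K, hK⟩ := exists_nat_gt (∑' n, ψ n ^ τ)
    have h1 : ∑ n ∈ Finset.Ioc 0 (MM τ Q K), ψ n ^ τ ≤ ∑' n, ψ n ^ τ :=
      Summable.sum_le_tsum _ (fun n _ => Real.rpow_nonneg (hψpos n).le τ) hsum
    linarith [hpartial K]
  · -- almost everywhere finiteness
    rw [MeasureTheory.ae_iff]
    apply measure_mono_null
      (t := ⋃ m : ℤ, Filter.limsup (fun k => SBad τ Q θ m k) Filter.atTop)
    · intro s hs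
      simp only [Set.mem_setOf_eq] at hs
      have hsinf : {n : ℕ | distNearestInt ((n : ℝ) * θ - s) < ψ n}.Infinite := hs
      refine Set.mem_iUnion.mpr ⟨⌊s⌋, ?_⟩
      rw [Filter.mem_limsup_iff_frequently_mem, Filter.frequently_atTop]
      intro a
      obtain ⟨n, hn, hlt⟩ := hsinf.exists_gt (MM τ Q (a + 1))
      have hspec : n ≤ MM τ Q (Kf n + 1) := Nat.find_spec (hMω n)
      refine ⟨Kf n, ?_, ?_⟩
      · by_contra h
        push_neg at h
        have h4 : MM τ Q (Kf n + 1) ≤ MM τ Q (a + 1) := MM_mono hτ hQ (by omega)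
        omega
      · refine ⟨⟨Int.floor_le s, Int.lt_floor_add_one s⟩, n, ⟨?_, hspec⟩, hn⟩
        rcases Nat.eq_zero_or_pos (Kf n) with h0 | h0
        · have := le_MM hτ hQ (a + 1)
          rw [h0, MM_zero]
          omega
        · have h5 := Nat.find_min (hMω n) (show Kf n - 1 < Kf n by omega)
          have h6 : Kf n - 1 + 1 = Kf n := by omega
          rw [h6] at h5
          omega
    · apply measure_iUnion_null
      intro m
      apply measure_limsup_atTop_eq_zero
      have hsummable : Summable (fun k : ℕ => 20 / ((k : ℝ) + 1) ^ 2) := by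
        have h0 : Summable (fun n : ℕ => 1 / (n : ℝ) ^ 2) :=
          Real.summable_one_div_nat_pow.mpr one_lt_two
        have h1 : Summable (fun n : ℕ => 1 / ((n + 1 : ℕ) : ℝ) ^ 2) :=
          (summable_nat_add_iff (f := fun n : ℕ => 1 / (n : ℝ) ^ 2) 1).mpr h0
        have h2 : Summable (fun n : ℕ => 1 / ((n : ℝ) + 1) ^ 2) := by
          convert h1 using 2 with n
          push_cast
          ring
        simpa [div_eq_mul_inv] using h2.mul_left (20:ℝ)
      have hle : ∑' k, volume (SBad τ Q θ m k)
          ≤ ENNReal.ofReal (∑' k : ℕ, 20 / ((k : ℝ) + 1) ^ 2) := by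
        rw [ENNReal.ofReal_tsum_of_nonneg (fun k => by positivity) hsummable]
        exact ENNReal.tsum_le_tsum (fun k => cover hτ hQ m k)
      exact ne_top_of_le_ne_top ENNReal.ofReal_ne_top hle
end
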